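/- arXiv:math/0404217 — 5 statements merged into one kernel-verified Lean document; each statement's English description precedes it below -/
import Mathlib

section
/- For every fixed m ∈ ℕ, as n → ∞ one has b_{n−m}/b_n ∼ (log n / n)^m, i.e., the ratio b_{n−m}·n^m / (b_n·(log n)^m) tends to 1. -/
set_option maxHeartbeats 1000000
open Filter Finset Real


open Filter

/-- The weight of a set system: the sum of edge sizes, counted with multiplicity. -/
def sysWeight (H : Multiset (Finset ℕ)) : ℕ := (H.map Finset.card).sum

/-- A set system is normalized if all its edges are nonempty and its vertex set
(the union of its edges) equals `{1, …, m}` for some `m`. -/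
def IsNormalized (H : Multiset (Finset ℕ)) : Prop :=
  (∀ E ∈ H, E.Nonempty) ∧ ∃ m : ℕ, H.sup = Finset.Icc 1 m

/-- `hpp n` = `hₙ''`, the number of normalized set systems (multisets of edges allowed)
of weight `n`. -/
noncomputable def hpp (n : ℕ) : ℕ :=
  Nat.card {H : Multiset (Finset ℕ) // IsNormalized H ∧ sysWeight H = n}

/-- `hp n` = `hₙ'`, the number of simple (no repeated edges) normalized set systems
of weight `n`. -/
noncomputable def hp (n : ℕ) : ℕ :=
  Nat.card {H : Multiset (Finset ℕ) // IsNormalized H ∧ sysWeight H = n ∧ H.Nodup}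

/-- The `n`-th Bell number: the number of partitions (equivalence relations)
of an `n`-element set. -/
noncomputable def bell (n : ℕ) : ℕ := Nat.card (Setoid (Fin n))

instance setoidFinite (n : ℕ) : Finite (Setoid (Fin n)) :=
  Finite.of_injective (fun s => s.r) (by
    intro a b h
    have h' : a.r = b.r := h
    cases a; cases b; cases h'; rfl)

noncomputable instance setoidFintype (n : ℕ) : Fintype (Setoid (Fin n)) :=
  Fintype.ofFinite _

/-- number of classes of a setoid -/
noncomputable def ncl {n : ℕ} (s : Setoid (Fin n)) : ℕ := Nat.card (Quotient s)

def fiberEquiv {n k : ℕ} (s : Setoid (Fin n)) :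
    {f : Fin n → Fin k // Setoid.ker f = s} ≃ (Quotient s ↪ Fin k) where
  toFun := fun ⟨f, hf⟩ =>
    ⟨Quotient.lift f (fun a b hab => by subst hf; exact hab),
     fun a b => by
      induction a using Quotient.ind
      induction b using Quotient.ind
      intro h
      exact Quotient.sound (by subst hf; exact h)⟩
  invFun := fun g =>
    ⟨fun x => g (Quotient.mk s x), by
      ext a b
      constructor
      · intro h
        exact Quotient.exact (g.injective h)
      · intro h
        show g _ = g _
        rw [Quotient.sound h]⟩
  left_inv := fun ⟨f, hf⟩ => rfl
  right_inv := fun g => by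
    ext a
    induction a using Quotient.ind
    rfl

lemma key_count (n k : ℕ) :
    k ^ n = ∑ s : Setoid (Fin n), k.descFactorial (ncl s) := by
  classical
  have h1 : Fintype.card (Fin n → Fin k) = k ^ n := by simp
  rw [← h1, Fintype.card_congr (Equiv.sigmaFiberEquiv (fun f : Fin n → Fin k => Setoid.ker f)).symm]
  rw [Fintype.card_sigma]
  refine Finset.sum_congr rfl (fun s _ => ?_)
  have : Fintype.card {f : Fin n → Fin k // Setoid.ker f = s}
      = Fintype.card (Quotient s ↪ Fin k) := Fintype.card_congr (fiberEquiv s)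
  rw [this, Fintype.card_embedding_eq]
  congr 1
  · simp
  · rw [ncl, Nat.card_eq_fintype_card]

lemma bell_pos (n : ℕ) : 0 < bell n := Nat.card_pos

lemma desc_le_fact (k j : ℕ) : k.descFactorial j ≤ k.factorial := by
  rcases le_or_gt j k with h | h
  · calc k.descFactorial j ≤ (k - j).factorial * k.descFactorial j :=
          Nat.le_mul_of_pos_left _ (Nat.factorial_pos _)
      _ = k.factorial := Nat.factorial_mul_descFactorial h
  · rw [Nat.descFactorial_eq_zero_iff_lt.2 h]; exact Nat.zero_le _

lemma pow_le_bell_mul_factorial (n k : ℕ) : k ^ n ≤ bell n * k.factorial := by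
  rw [key_count n k, bell, Nat.card_eq_fintype_card, ← Finset.card_univ, ← smul_eq_mul,
    ← Finset.sum_const]
  exact Finset.sum_le_sum (fun s _ => desc_le_fact k (ncl s))

lemma ncl_le {n : ℕ} (s : Setoid (Fin n)) : ncl s ≤ n := by
  have := Nat.card_le_card_of_surjective (Quotient.mk s) Quotient.mk_surjective
  simpa [ncl] using this

lemma card_filter_mul_factorial_le (n k : ℕ) :
    (univ.filter (fun s : Setoid (Fin n) => ncl s = k)).card * k.factorial ≤ k ^ n := by
  classical
  rw [key_count n k, ← smul_eq_mul, ← Finset.sum_const]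
  calc ∑ _s ∈ univ.filter (fun s : Setoid (Fin n) => ncl s = k), k.factorial
      = ∑ s ∈ univ.filter (fun s : Setoid (Fin n) => ncl s = k), k.descFactorial (ncl s) := by
        refine Finset.sum_congr rfl (fun s hs => ?_)
        rw [(Finset.mem_filter.1 hs).2, Nat.descFactorial_self]
    _ ≤ ∑ s : Setoid (Fin n), k.descFactorial (ncl s) :=
        Finset.sum_le_sum_of_subset (Finset.filter_subset _ _)

lemma bell_le_sum (n : ℕ) :
    (bell n : ℝ) ≤ ∑ k ∈ range (n + 1), (k : ℝ) ^ n / (k.factorial : ℝ) := by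
  classical
  have hcard : bell n = ∑ k ∈ range (n + 1),
      (univ.filter (fun s : Setoid (Fin n) => ncl s = k)).card := by
    rw [bell, Nat.card_eq_fintype_card, ← Finset.card_univ]
    exact Finset.card_eq_sum_card_fiberwise (fun s _ => Finset.mem_range.2 (Nat.lt_succ_of_le (ncl_le s)))
  rw [hcard]
  push_cast
  refine Finset.sum_le_sum (fun k _ => ?_)
  rw [le_div_iff₀ (by positivity)]
  exact_mod_cast card_filter_mul_factorial_le n k

lemma pow_div_factorial_le_bell (n k : ℕ) :
    (k : ℝ) ^ n / (k.factorial : ℝ) ≤ (bell n : ℝ) := by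
  rw [div_le_iff₀ (by positivity)]
  exact_mod_cast pow_le_bell_mul_factorial n k

lemma desc_div_fact (i j : ℕ) :
    ((i + j).descFactorial j : ℝ) / ((i + j).factorial : ℝ) = 1 / (i.factorial : ℝ) := by
  have h : (i.factorial : ℝ) * ((i+j).descFactorial j : ℝ) = ((i+j).factorial : ℝ) := by
    have := Nat.factorial_mul_descFactorial (Nat.le_add_left j i)
    rw [Nat.add_sub_cancel] at this
    exact_mod_cast this
  rw [div_eq_div_iff (by positivity) (by positivity), one_mul]
  linarith [h]

lemma summable_one_div_fact : Summable (fun i : ℕ => (1:ℝ) / (i.factorial : ℝ)) := by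
  simpa using Real.summable_pow_div_factorial 1

lemma summable_desc (j : ℕ) :
    Summable (fun k : ℕ => (Nat.descFactorial k j : ℝ) / (k.factorial : ℝ)) := by
  rw [← summable_nat_add_iff j]
  refine summable_one_div_fact.congr (fun i => ?_)
  exact (desc_div_fact i j).symm

lemma tsum_desc (j : ℕ) :
    ∑' k, (Nat.descFactorial k j : ℝ) / (k.factorial : ℝ)
      = ∑' i : ℕ, (1:ℝ) / (i.factorial : ℝ) := by
  rw [← Summable.sum_add_tsum_nat_add j (summable_desc j)]
  have h0 : ∑ i ∈ range j, (Nat.descFactorial i j : ℝ) / (i.factorial : ℝ) = 0 := by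
    refine Finset.sum_eq_zero (fun i hi => ?_)
    rw [Nat.descFactorial_eq_zero_iff_lt.2 (Finset.mem_range.1 hi)]
    simp
  rw [h0, zero_add]
  exact tsum_congr (fun i => desc_div_fact i j)

noncomputable def EE : ℝ := ∑' i : ℕ, (1:ℝ) / (i.factorial : ℝ)

lemma one_le_EE : 1 ≤ EE := by
  have := Summable.le_tsum summable_one_div_fact 0 (fun i _ => by positivity)
  simpa [EE] using this

lemma EE_pos : 0 < EE := lt_of_lt_of_le one_pos one_le_EE

lemma summable_dob (n : ℕ) : Summable (fun k : ℕ => (k:ℝ) ^ n / (k.factorial : ℝ)) := by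
  refine summable_of_ratio_norm_eventually_le (r := 1/2) (by norm_num) ?_
  filter_upwards [eventually_ge_atTop (2 ^ (n + 1))] with k hk
  have hk1 : (1:ℝ) ≤ (k:ℝ) := by
    exact_mod_cast le_trans (Nat.one_le_two_pow) hk
  have h2 : (2:ℝ) ^ (n+1) ≤ (k:ℝ) + 1 := by
    have : ((2:ℝ)) ^ (n+1) ≤ (k:ℝ) := by exact_mod_cast hk
    linarith
  have hfpos : (0:ℝ) < (k.factorial : ℝ) := by exact_mod_cast Nat.factorial_pos k
  rw [Real.norm_of_nonneg (by positivity), Real.norm_of_nonneg (by positivity),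
    Nat.factorial_succ]
  push_cast
  calc ((k:ℝ) + 1) ^ n / (((k:ℝ) + 1) * (k.factorial : ℝ))
      ≤ (2 ^ n * (k:ℝ) ^ n) / ((2 ^ (n+1)) * (k.factorial : ℝ)) := by
        refine div_le_div₀ (by positivity) ?_ (by positivity) (by nlinarith)
        rw [← mul_pow]
        exact pow_le_pow_left₀ (by positivity) (by linarith) n
    _ = 1/2 * ((k:ℝ) ^ n / (k.factorial : ℝ)) := by
        rw [pow_succ]
        field_simp

lemma dobinski (n : ℕ) : EE * (bell n : ℝ) = ∑' k : ℕ, (k:ℝ) ^ n / (k.factorial : ℝ) := by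
  have h1 : ∀ k : ℕ, (k:ℝ) ^ n / (k.factorial : ℝ)
      = ∑ s : Setoid (Fin n), (Nat.descFactorial k (ncl s) : ℝ) / (k.factorial : ℝ) := by
    intro k
    rw [← Finset.sum_div]
    congr 1
    exact_mod_cast key_count n k
  rw [tsum_congr h1, Summable.tsum_finsetSum (fun s _ => summable_desc (ncl s)),
    Finset.sum_congr rfl (fun s _ => tsum_desc (ncl s)), Finset.sum_const, Finset.card_univ,
    nsmul_eq_mul, bell, Nat.card_eq_fintype_card, mul_comm]
  rfl

lemma tsum_sq_le (n : ℕ) :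
    (∑' k : ℕ, (k:ℝ) ^ (n+1) / (k.factorial : ℝ))^2
      ≤ (∑' k : ℕ, (k:ℝ) ^ n / (k.factorial : ℝ)) * (∑' k : ℕ, (k:ℝ) ^ (n+2) / (k.factorial : ℝ)) := by
  set S : ℕ → ℕ → ℝ := fun m N => ∑ k ∈ range N, (k:ℝ) ^ m / (k.factorial : ℝ) with hS
  have hCS : ∀ N, (S (n+1) N)^2 ≤ S n N * S (n+2) N := by
    intro N
    have := Finset.sum_mul_sq_le_sq_mul_sq (range N)
      (fun k : ℕ => Real.sqrt ((k:ℝ) ^ n / (k.factorial : ℝ)))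
      (fun k : ℕ => Real.sqrt ((k:ℝ) ^ (n+2) / (k.factorial : ℝ)))
    have e1 : ∀ k : ℕ, Real.sqrt ((k:ℝ) ^ n / (k.factorial : ℝ))
        * Real.sqrt ((k:ℝ) ^ (n+2) / (k.factorial : ℝ)) = (k:ℝ) ^ (n+1) / (k.factorial : ℝ) := by
      intro k
      rw [← Real.sqrt_mul (by positivity)]
      have : (k:ℝ) ^ n / (k.factorial : ℝ) * ((k:ℝ) ^ (n+2) / (k.factorial : ℝ))
          = ((k:ℝ) ^ (n+1) / (k.factorial : ℝ))^2 := by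
        field_simp
        ring
      rw [this, Real.sqrt_sq (by positivity)]
    have e2 : ∀ (m k : ℕ), Real.sqrt ((k:ℝ) ^ m / (k.factorial : ℝ))^2
        = (k:ℝ) ^ m / (k.factorial : ℝ) := by
      intro m k
      exact Real.sq_sqrt (by positivity)
    simp only [e1, e2] at this
    simpa [hS] using this
  have hlim : ∀ m, Tendsto (S m) atTop (nhds (∑' k : ℕ, (k:ℝ) ^ m / (k.factorial : ℝ))) :=
    fun m => (summable_dob m).hasSum.tendsto_sum_nat
  exact le_of_tendsto_of_tendsto' ((hlim (n+1)).pow 2) ((hlim n).mul (hlim (n+2))) hCS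

lemma bell_logconvex (n : ℕ) : (bell (n+1) : ℝ)^2 ≤ (bell n : ℝ) * (bell (n+2) : ℝ) := by
  have h := tsum_sq_le n
  rw [← dobinski, ← dobinski, ← dobinski] at h
  have hE2 : (0:ℝ) < EE^2 := pow_pos EE_pos 2
  have h' : EE^2 * ((bell (n+1):ℝ)^2) ≤ EE^2 * ((bell n:ℝ) * (bell (n+2):ℝ)) := by
    ring_nf at h ⊢
    linarith
  exact le_of_mul_le_mul_left h' hE2

noncomputable def LL (n : ℕ) : ℝ := Real.log (bell n)
noncomputable def FF (x : ℝ) : ℝ := x * Real.log x - x * Real.log (Real.log x) - x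
noncomputable def Err (x : ℝ) : ℝ := (4 * Real.log (Real.log x) + 3) * x / Real.log x

lemma tendsto_log_nat : Tendsto (fun n : ℕ => Real.log n) atTop atTop :=
  Real.tendsto_log_atTop.comp (tendsto_natCast_atTop_atTop)

lemma tendsto_loglog_nat : Tendsto (fun n : ℕ => Real.log (Real.log n)) atTop atTop :=
  Real.tendsto_log_atTop.comp tendsto_log_nat

lemma sq_log_le (x : ℝ) (hx : 1 ≤ x) : Real.log x ^ 2 ≤ 4 * x := by
  have hs : Real.sqrt x ≥ 1 := by
    rw [show (1:ℝ) = Real.sqrt 1 by simp]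
    exact Real.sqrt_le_sqrt hx
  have h1 : Real.log x = 2 * Real.log (Real.sqrt x) := by
    rw [Real.log_sqrt (by linarith)]; ring
  have h2 : Real.log (Real.sqrt x) ≤ Real.sqrt x - 1 :=
    Real.log_le_sub_one_of_pos (by linarith)
  have h3 : Real.log x ≤ 2 * Real.sqrt x := by
    rw [h1]; nlinarith [Real.sqrt_nonneg x]
  have h4 : (0:ℝ) ≤ Real.log x := Real.log_nonneg hx
  have h5 : Real.sqrt x ^ 2 = x := Real.sq_sqrt (by linarith)
  nlinarith [Real.sqrt_nonneg x]

/-- lower bound: eventually `FF n - Err n ≤ LL n`. -/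
lemma LL_lower : ∀ᶠ n : ℕ in atTop, FF n - Err n ≤ LL n := by
  filter_upwards [tendsto_log_nat.eventually_ge_atTop 2,
    tendsto_loglog_nat.eventually_ge_atTop 1,
    eventually_ge_atTop 2] with n hlog hllog hn2
  have hn : (2:ℝ) ≤ (n:ℝ) := by exact_mod_cast hn2
  have hlogpos : (0:ℝ) < Real.log n := by linarith
  have hnpos : (0:ℝ) < n := by linarith
  set k : ℕ := ⌈(n:ℝ) / Real.log n⌉₊ with hk
  have hx0 : (1:ℝ) ≤ (n:ℝ) / Real.log n := by
    rw [le_div_iff₀ hlogpos, one_mul]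
    calc Real.log n ≤ (n:ℝ) - 1 := Real.log_le_sub_one_of_pos hnpos
      _ ≤ n := by linarith
  have hk1 : 1 ≤ k := by
    rw [hk]
    exact_mod_cast Nat.one_le_ceil_iff.2 (by linarith)
  have hkreal : ((n:ℝ) / Real.log n) ≤ (k:ℝ) := Nat.le_ceil _
  have hkub : (k:ℝ) ≤ (n:ℝ) / Real.log n + 1 := le_of_lt (Nat.ceil_lt_add_one (by linarith))
  have hkn : (k:ℝ) ≤ (n:ℝ) := by
    have : (n:ℝ) / Real.log n ≤ (n:ℝ)/2 := by
      apply div_le_div_of_nonneg_left (by linarith) (by norm_num) hlog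
    linarith
  have hkpos : (0:ℝ) < (k:ℝ) := by exact_mod_cast hk1
  -- LL n ≥ n log k - log k!
  have hfact : (0:ℝ) < (Nat.factorial k : ℝ) := by exact_mod_cast Nat.factorial_pos k
  have h1 : Real.log ((k:ℝ) ^ n / (Nat.factorial k : ℝ)) ≤ LL n := by
    apply Real.log_le_log (by positivity)
    exact pow_div_factorial_le_bell n k
  rw [Real.log_div (by positivity) (by positivity), Real.log_pow] at h1
  -- log k! ≤ k log k
  have h2 : Real.log (Nat.factorial k : ℝ) ≤ (k:ℝ) * Real.log k := by
    calc Real.log (Nat.factorial k : ℝ) ≤ Real.log ((k:ℝ)^k) := by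
          apply Real.log_le_log hfact
          exact_mod_cast Nat.factorial_le_pow k
      _ = (k:ℝ) * Real.log k := by rw [Real.log_pow]
  -- log k ≥ log n - loglog n
  have h3 : Real.log n - Real.log (Real.log n) ≤ Real.log k := by
    calc Real.log n - Real.log (Real.log n) = Real.log ((n:ℝ)/Real.log n) := by
          rw [Real.log_div (by linarith) (by linarith)]
      _ ≤ Real.log k := Real.log_le_log (by linarith) hkreal
  have hlogk_le : Real.log k ≤ Real.log n := Real.log_le_log hkpos hkn
  have hlogk_nn : 0 ≤ Real.log k := Real.log_nonneg (by exact_mod_cast hk1)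
  -- k log k ≤ n + log n
  have h4 : (k:ℝ) * Real.log k ≤ (n:ℝ) + Real.log n := by
    calc (k:ℝ) * Real.log k ≤ ((n:ℝ)/Real.log n + 1) * Real.log n :=
          mul_le_mul hkub hlogk_le hlogk_nn (by positivity)
      _ = (n:ℝ) + Real.log n := by field_simp
  -- combine
  have h5 : (n:ℝ) * (Real.log n - Real.log (Real.log n)) ≤ (n:ℝ) * Real.log k :=
    mul_le_mul_of_nonneg_left h3 (by linarith)
  have hmain : FF n - Real.log n ≤ LL n := by
    have : FF n = (n:ℝ) * (Real.log n - Real.log (Real.log n)) - n := by rw [FF]; ring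
    rw [this]
    calc (n:ℝ) * (Real.log n - Real.log (Real.log n)) - n - Real.log n
        ≤ (n:ℝ) * Real.log k - ((n:ℝ) + Real.log n) := by linarith
      _ ≤ (n:ℝ) * Real.log k - (k:ℝ) * Real.log k := by linarith
      _ ≤ (n:ℝ) * Real.log k - Real.log (Nat.factorial k : ℝ) := by linarith
      _ ≤ LL n := h1
  -- log n ≤ Err n
  have h6 : Real.log n ≤ Err n := by
    rw [Err]
    have hsq : Real.log n ^ 2 ≤ 4 * n := sq_log_le n (by linarith)
    rw [le_div_iff₀ hlogpos]
    have : Real.log n * Real.log n ≤ 4 * n := by nlinarith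
    nlinarith [hnpos, hllog, hlogpos]
  linarith

lemma log_add_le {x y : ℝ} (hx : 0 < x) (hy : 0 ≤ y) :
    Real.log (x + y) ≤ Real.log x + y / x := by
  have h : Real.log (x + y) - Real.log x = Real.log ((x+y)/x) := by
    rw [Real.log_div (by linarith) hx.ne']
  have h2 : Real.log ((x+y)/x) ≤ (x+y)/x - 1 := Real.log_le_sub_one_of_pos (by positivity)
  have h3 : (x+y)/x - 1 = y/x := by field_simp; ring
  linarith [h.le, h.ge]

lemma log_add_ge {x y : ℝ} (hx : 0 < x) (hy : 0 ≤ y) :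
    Real.log x + y / (x + y) ≤ Real.log (x + y) := by
  have h : Real.log (x + y) - Real.log x = Real.log ((x+y)/x) := by
    rw [Real.log_div (by linarith) hx.ne']
  have h2 : Real.log (x / (x+y)) ≤ x/(x+y) - 1 := Real.log_le_sub_one_of_pos (by positivity)
  have h4 : Real.log (x/(x+y)) = - Real.log ((x+y)/x) := by
    rw [← Real.log_inv]
    congr 1
    field_simp
  have h5 : x/(x+y) - 1 = -(y/(x+y)) := by field_simp; ring
  linarith [h.le, h.ge]

/-- upper window estimate -/
lemma FW1 {x y : ℝ} (hx : 1 ≤ Real.log x) (hy : 0 ≤ y) (hx1 : 1 ≤ x) :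
    FF (x + y) - FF x ≤ y * ((Real.log x - Real.log (Real.log x)) + y / x) := by
  have hxpos : (0:ℝ) < x := by linarith
  have hlogxy : Real.log x ≤ Real.log (x + y) := Real.log_le_log hxpos (by linarith)
  have hT : 0 ≤ Real.log (Real.log x) := Real.log_nonneg hx
  have hA : (x+y) * Real.log (x+y) - x * Real.log x ≤ y + y * Real.log x + y * (y/x) := by
    have l1 : Real.log (x+y) ≤ Real.log x + y/x := log_add_le hxpos hy
    have m1 := mul_le_mul_of_nonneg_left l1 hxpos.le
    have m2 := mul_le_mul_of_nonneg_left l1 hy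
    have e : x * (y/x) = y := by field_simp
    linarith [m1, m2, e.le, e.ge]
  have hB : y * Real.log (Real.log x) ≤ (x+y) * Real.log (Real.log (x+y)) - x * Real.log (Real.log x) := by
    have l2 : Real.log (Real.log x) ≤ Real.log (Real.log (x+y)) :=
      Real.log_le_log (by linarith) hlogxy
    have m := mul_le_mul_of_nonneg_left l2 (by linarith : (0:ℝ) ≤ x + y)
    linarith [m]
  rw [FF, FF]
  have e2 : y * ((Real.log x - Real.log (Real.log x)) + y/x)
      = y * Real.log x - y * Real.log (Real.log x) + y * (y/x) := by ring
  linarith [hA, hB, e2.le, e2.ge]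

/-- lower window estimate (with z = x - y) -/
lemma FW2 {z y : ℝ} (hz : 1 ≤ Real.log z) (hy : 0 ≤ y) (hz1 : 1 ≤ z) :
    y * (Real.log (z+y) - Real.log (Real.log (z+y))) - y^2/z - y / Real.log z
      ≤ FF (z + y) - FF z := by
  have hzpos : (0:ℝ) < z := by linarith
  have hlz : (0:ℝ) < Real.log z := by linarith
  have hlogzy : Real.log z ≤ Real.log (z + y) := Real.log_le_log hzpos (by linarith)
  have hT : 0 ≤ Real.log (Real.log z) := Real.log_nonneg hz
  have hA : y * Real.log (z+y) + y - y^2/z ≤ (z+y) * Real.log (z+y) - z * Real.log z := by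
    have l1 : Real.log z + y/(z+y) ≤ Real.log (z+y) := log_add_ge hzpos hy
    have l3 : y - y^2/z ≤ z * (y/(z+y)) := by
      have e : z * (y/(z+y)) - (y - y^2/z) = y^3/(z*(z+y)) := by
        field_simp
        ring
      have p : (0:ℝ) ≤ y^3/(z*(z+y)) := by positivity
      linarith [e.le, e.ge]
    have m1 := mul_le_mul_of_nonneg_left l1 hzpos.le
    have m2 := mul_le_mul_of_nonneg_left hlogzy hy
    linarith [m1, m2, l3]
  have hB : (z+y) * Real.log (Real.log (z+y)) - z * Real.log (Real.log z)
      ≤ y * Real.log (Real.log (z+y)) + y / Real.log z := by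
    have l2 : Real.log (Real.log (z+y)) - Real.log (Real.log z)
        ≤ (Real.log (z+y) - Real.log z) / Real.log z := by
      have e1 : Real.log (Real.log (z+y)) - Real.log (Real.log z)
          = Real.log (Real.log (z+y) / Real.log z) := by
        rw [Real.log_div (by linarith) (by linarith)]
      rw [e1]
      calc Real.log (Real.log (z+y) / Real.log z) ≤ Real.log (z+y) / Real.log z - 1 :=
            Real.log_le_sub_one_of_pos (div_pos (by linarith) hlz)
        _ = (Real.log (z+y) - Real.log z) / Real.log z := by field_simp
    have l4 : Real.log (z+y) - Real.log z ≤ y/z := by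
      have := log_add_le hzpos hy
      linarith
    have l6 : z * (Real.log (Real.log (z+y)) - Real.log (Real.log z)) ≤ y / Real.log z := by
      calc z * (Real.log (Real.log (z+y)) - Real.log (Real.log z))
          ≤ z * ((Real.log (z+y) - Real.log z) / Real.log z) :=
            mul_le_mul_of_nonneg_left l2 hzpos.le
        _ ≤ z * ((y/z) / Real.log z) := by
            apply mul_le_mul_of_nonneg_left _ hzpos.le
            exact (div_le_div_iff_of_pos_right hlz).2 l4
        _ = y / Real.log z := by field_simp
    have e : (z+y) * Real.log (Real.log (z+y)) - z * Real.log (Real.log z)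
        = z * (Real.log (Real.log (z+y)) - Real.log (Real.log z))
          + y * Real.log (Real.log (z+y)) := by ring
    linarith [l6, e.le, e.ge]
  have e2 : y * (Real.log (z+y) - Real.log (Real.log (z+y)))
      = y * Real.log (z+y) - y * Real.log (Real.log (z+y)) := by ring
  rw [FF, FF]
  linarith [hA, hB, e2.le, e2.ge]

lemma tangent_bound {n x x0 : ℝ} (hn : 0 ≤ n) (hx : 0 < x) (hx0 : 0 < x0) :
    n * Real.log x - x * Real.log x + x
      ≤ n * Real.log x0 - x0 * Real.log x0 + x0 + (n / x0 - Real.log x0) * (x - x0) := by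
  have p1 : Real.log x - Real.log x0 ≤ (x - x0) / x0 := by
    rw [← Real.log_div hx.ne' hx0.ne']
    calc Real.log (x / x0) ≤ x / x0 - 1 := Real.log_le_sub_one_of_pos (by positivity)
      _ = (x - x0) / x0 := by field_simp
  have p2 : Real.log x0 - Real.log x ≤ x0 / x - 1 := by
    rw [← Real.log_div hx0.ne' hx.ne']
    exact Real.log_le_sub_one_of_pos (by positivity)
  have A : n * Real.log x ≤ n * Real.log x0 + n / x0 * (x - x0) := by
    have h := mul_le_mul_of_nonneg_left p1 hn
    have e : n * ((x - x0) / x0) = n / x0 * (x - x0) := by ring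
    nlinarith [h]
  have B : x * Real.log x0 - x * Real.log x ≤ x0 - x := by
    have h := mul_le_mul_of_nonneg_left p2 hx.le
    have e : x * (x0 / x - 1) = x0 - x := by field_simp
    nlinarith [h]
  nlinarith [A, B]

lemma term_le_exp (n k : ℕ) (hk : 1 ≤ k) (hkn : k ≤ n) :
    (k:ℝ) ^ n / (k.factorial : ℝ)
      ≤ Real.exp ((n:ℝ) * Real.log k - (k:ℝ) * Real.log k + (k:ℝ)) := by
  have hkpos : (0:ℝ) < (k:ℝ) := by exact_mod_cast hk
  have hfpos : (0:ℝ) < (k.factorial : ℝ) := by exact_mod_cast k.factorial_pos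
  have h1 : (k:ℝ) ^ k / (k.factorial : ℝ) ≤ Real.exp k := by
    calc (k:ℝ) ^ k / (k.factorial : ℝ)
        ≤ ∑ i ∈ range (k+1), (k:ℝ) ^ i / (i.factorial : ℝ) := by
          refine Finset.single_le_sum (f := fun i => (k:ℝ)^i / (i.factorial : ℝ))
            (fun i _ => by positivity) (self_mem_range_succ k)
      _ ≤ Real.exp k := Real.sum_le_exp_of_nonneg (by positivity) _
  have hsplit : (k:ℝ) ^ n = (k:ℝ) ^ (n - k) * (k:ℝ) ^ k := by
    rw [← pow_add]
    congr 1
    omega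
  have h2 : (k:ℝ) ^ (n - k) = Real.exp (((n:ℕ) - (k:ℕ) : ℕ) * Real.log k) := by
    rw [Real.exp_nat_mul, Real.exp_log hkpos]
  calc (k:ℝ) ^ n / (k.factorial : ℝ) = (k:ℝ) ^ (n-k) * ((k:ℝ)^k / (k.factorial : ℝ)) := by
        rw [hsplit]; ring
    _ ≤ (k:ℝ) ^ (n-k) * Real.exp k := by
        apply mul_le_mul_of_nonneg_left h1 (by positivity)
    _ = Real.exp (((n - k : ℕ) : ℝ) * Real.log k + k) := by
        rw [h2, ← Real.exp_add]
    _ = Real.exp ((n:ℝ) * Real.log k - (k:ℝ) * Real.log k + (k:ℝ)) := by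
        congr 1
        have : ((n - k : ℕ) : ℝ) = (n:ℝ) - (k:ℝ) := Nat.cast_sub hkn
        rw [this]; ring

lemma log_sq_le_sqrt {x : ℝ} (hx : 1 ≤ x) : Real.log x ^ 2 ≤ 16 * Real.sqrt x := by
  have h0 : (0:ℝ) ≤ x := by linarith
  have hs : (1:ℝ) ≤ Real.sqrt x := by
    rw [show (1:ℝ) = Real.sqrt 1 by simp]
    exact Real.sqrt_le_sqrt hx
  have hss : (0:ℝ) ≤ Real.sqrt (Real.sqrt x) := Real.sqrt_nonneg _
  have e1 : Real.log x = 4 * Real.log (Real.sqrt (Real.sqrt x)) := by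
    rw [Real.log_sqrt (Real.sqrt_nonneg x), Real.log_sqrt h0]; ring
  have e2 : Real.log (Real.sqrt (Real.sqrt x)) ≤ Real.sqrt (Real.sqrt x) := by
    calc Real.log (Real.sqrt (Real.sqrt x)) ≤ Real.sqrt (Real.sqrt x) - 1 :=
          Real.log_le_sub_one_of_pos (by positivity)
      _ ≤ Real.sqrt (Real.sqrt x) := by linarith
  have e3 : Real.log x ≤ 4 * Real.sqrt (Real.sqrt x) := by rw [e1]; linarith
  have e4 : (0:ℝ) ≤ Real.log x := Real.log_nonneg hx
  have e5 : Real.sqrt (Real.sqrt x) ^ 2 = Real.sqrt x := Real.sq_sqrt (Real.sqrt_nonneg x)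
  nlinarith [e3, e4, e5, hss]

lemma log_le_half {y : ℝ} (hy : 0 ≤ y) : Real.log y ≤ y / 2 := by
  rcases le_or_gt y 1 with h | h
  · calc Real.log y ≤ 0 := Real.log_nonpos hy h
      _ ≤ y / 2 := by linarith
  · have e1 : Real.log y = 2 * Real.log (Real.sqrt y) := by
      rw [Real.log_sqrt hy]; ring
    have e2 : Real.log (Real.sqrt y) ≤ Real.sqrt y - 1 :=
      Real.log_le_sub_one_of_pos (Real.sqrt_pos.2 (by linarith))
    have e5 : Real.sqrt y ^ 2 = y := Real.sq_sqrt hy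
    nlinarith [sq_nonneg (Real.sqrt y - 2)]

lemma LL_upper : ∀ᶠ n : ℕ in atTop, LL n ≤ FF n + Err n := by
  filter_upwards [tendsto_log_nat.eventually_ge_atTop 2,
    tendsto_loglog_nat.eventually_ge_atTop 1,
    eventually_ge_atTop 576] with n hS hT hn576
  have hn2 : (576:ℝ) ≤ (n:ℝ) := by exact_mod_cast hn576
  have hnpos : (0:ℝ) < (n:ℝ) := by linarith
  set S := Real.log n with hSdef
  set T := Real.log (Real.log n) with hTdef
  have hSpos : (0:ℝ) < S := by linarith
  have hhalf : T ≤ S / 2 := by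
    have := log_le_half (y := Real.log n) (by linarith)
    exact this
  set Λ := S - T with hΛdef
  have hΛhalf : S / 2 ≤ Λ := by rw [hΛdef]; linarith
  have hΛpos : (0:ℝ) < Λ := by linarith
  have hΛ1 : (1:ℝ) ≤ Λ := by linarith
  have hΛleS : Λ ≤ S := by rw [hΛdef]; linarith
  set x0 := (n:ℝ) / Λ with hx0def
  have hx0pos : (0:ℝ) < x0 := by positivity
  have hx0Λ : x0 * Λ = n := div_mul_cancel₀ _ hΛpos.ne'
  have hx0Λ' : x0 * (S - T) = n := by rw [← hΛdef]; exact hx0Λ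
  have hx0n : x0 ≤ (n:ℝ) := by
    rw [hx0def, div_le_iff₀ hΛpos]; nlinarith
  have hx0S : x0 ≤ 2 * n / S := by
    rw [hx0def, div_le_div_iff₀ hΛpos hSpos]; nlinarith
  set U := Real.log Λ with hUdef
  have hUnn : 0 ≤ U := Real.log_nonneg hΛ1
  set G := T - U with hGdef
  have hGnn : 0 ≤ G := sub_nonneg.2 (Real.log_le_log hΛpos hΛleS)
  have hG : G ≤ 2 * T / S := by
    have h2 : Real.log (S / Λ) ≤ S / Λ - 1 := Real.log_le_sub_one_of_pos (by positivity)
    have h1 : Real.log (S / Λ) = T - U := by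
      rw [Real.log_div hSpos.ne' hΛpos.ne']
    have h3 : S / Λ - 1 = (S - Λ) / Λ := by field_simp
    have h5 : (S - Λ) / Λ ≤ 2 * T / S := by
      rw [hΛdef, div_le_div_iff₀ hΛpos hSpos]
      have hTnn : (0:ℝ) ≤ T := by linarith
      calc (S - (S - T)) * S = T * S := by ring
        _ ≤ 2 * T * (S - T) := by nlinarith
    rw [hGdef, ← h1]
    linarith [h2, h3.le, h5, h3.ge]
  have hlogx0 : Real.log x0 = S - U := by
    rw [hx0def, Real.log_div hnpos.ne' hΛpos.ne']
  set Bd := FF n + (4 * T * n + 2 * n) / S with hBddef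
  have hterm : ∀ k ∈ range (n+1), (k:ℝ) ^ n / (k.factorial : ℝ) ≤ Real.exp Bd := by
    intro k hk
    have hkn : k ≤ n := Nat.lt_succ_iff.1 (Finset.mem_range.1 hk)
    rcases Nat.eq_zero_or_pos k with rfl | hk1
    · have hz : ((0:ℕ):ℝ) ^ n = 0 := by
        rw [Nat.cast_zero]
        exact zero_pow (by omega)
      rw [hz, zero_div]
      exact (Real.exp_pos _).le
    · refine le_trans (term_le_exp n k hk1 hkn) (Real.exp_le_exp.2 ?_)
      have hkR : (0:ℝ) < (k:ℝ) := by exact_mod_cast hk1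
      have ht := tangent_bound (n := (n:ℝ)) (x := (k:ℝ)) (x0 := x0) hnpos.le hkR hx0pos
      have hnx0 : (n:ℝ) / x0 = Λ := by
        rw [eq_comm, eq_div_iff hx0pos.ne', mul_comm]
        exact hx0Λ
      rw [hnx0, hlogx0] at ht
      have hslope : Λ - (S - U) = -G := by rw [hΛdef, hGdef]; ring
      rw [hslope] at ht
      have hb1 : -G * ((k:ℝ) - x0) ≤ G * x0 := by
        nlinarith [mul_nonneg hGnn hkR.le]
      have hFF : FF (n:ℝ) = (n:ℝ) * S - (n:ℝ) * T - n := by rw [FF]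
      have hx0G : (0:ℝ) ≤ x0 * G := mul_nonneg hx0pos.le hGnn
      have hcalc : (n:ℝ)*S - (n:ℝ)*T - (n:ℝ) + (n:ℝ)*G + x0
          - ((n:ℝ) * (S - U) - x0 * (S - U) + x0) = x0 * G := by
        rw [hGdef, ← hx0Λ']; ring
      have hb2 : (n:ℝ) * (S - U) - x0 * (S - U) + x0
          ≤ (n:ℝ)*S - (n:ℝ)*T - (n:ℝ) + (n:ℝ) * G + x0 := by
        linarith [hcalc, hx0G]
      have hb3 : (n:ℝ) * G + x0 + G * x0 ≤ (4 * T * n + 2 * n) / S := by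
        have e1 : (n:ℝ) * G ≤ (n:ℝ) * (2 * T / S) := mul_le_mul_of_nonneg_left hG hnpos.le
        have e2 : G * x0 ≤ (2 * T / S) * (n:ℝ) := by
          calc G * x0 ≤ (2 * T / S) * x0 := mul_le_mul_of_nonneg_right hG hx0pos.le
            _ ≤ (2 * T / S) * (n:ℝ) := by
              apply mul_le_mul_of_nonneg_left hx0n
              have hTnn : (0:ℝ) ≤ T := by linarith
              positivity
        have e4 : (n:ℝ) * (2 * T / S) + (2 * T / S) * (n:ℝ) + 2 * n / S
            = (4 * T * n + 2 * n) / S := by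
          field_simp; ring
        linarith [e1, e2, hx0S, e4.le, e4.ge]
      calc (n:ℝ) * Real.log k - (k:ℝ) * Real.log k + (k:ℝ)
          ≤ (n:ℝ) * (S - U) - x0 * (S - U) + x0 + -G * ((k:ℝ) - x0) := ht
        _ ≤ (n:ℝ)*S - (n:ℝ)*T - (n:ℝ) + (n:ℝ) * G + x0 + G * x0 := by linarith [hb1, hb2]
        _ ≤ (n:ℝ)*S - (n:ℝ)*T - (n:ℝ) + (4 * T * n + 2 * n) / S := by linarith [hb3]
        _ = Bd := by rw [hBddef, hFF]
  have hsum : (bell n : ℝ) ≤ ((n:ℝ) + 1) * Real.exp Bd := by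
    have h1 := bell_le_sum n
    have h2 : ∑ k ∈ range (n + 1), (k : ℝ) ^ n / (k.factorial : ℝ)
        ≤ ∑ _k ∈ range (n + 1), Real.exp Bd := Finset.sum_le_sum hterm
    have h3 : ∑ _k ∈ range (n + 1), Real.exp Bd = ((n:ℝ) + 1) * Real.exp Bd := by
      rw [Finset.sum_const, Finset.card_range, nsmul_eq_mul]
      push_cast; ring
    linarith [h1, h2, h3.le, h3.ge]
  have hLL : LL n ≤ Real.log ((n:ℝ) + 1) + Bd := by
    rw [LL]
    calc Real.log (bell n : ℝ) ≤ Real.log (((n:ℝ) + 1) * Real.exp Bd) := by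
          apply Real.log_le_log (by exact_mod_cast bell_pos n) hsum
      _ = Real.log ((n:ℝ) + 1) + Bd := by
          rw [Real.log_mul (by positivity) (Real.exp_pos _).ne', Real.log_exp]
  have hfin : Real.log ((n:ℝ) + 1) ≤ (n:ℝ) / S := by
    have l1 : Real.log ((n:ℝ) + 1) ≤ S + 1 := by
      have e : Real.log ((n:ℝ) + 1) = S + Real.log (((n:ℝ)+1)/n) := by
        rw [hSdef, ← Real.log_mul hnpos.ne' (by positivity : (((n:ℝ)+1)/n) ≠ 0)]
        congr 1
        field_simp
      have e2 : Real.log (((n:ℝ)+1)/n) ≤ ((n:ℝ)+1)/n - 1 :=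
        Real.log_le_sub_one_of_pos (by positivity)
      have e3 : ((n:ℝ)+1)/n - 1 ≤ 1 := by
        rw [div_sub_one hnpos.ne', div_le_one hnpos]
        linarith
      linarith [e.le, e.ge]
    have l2 : S ^ 2 ≤ 16 * Real.sqrt n := log_sq_le_sqrt (by linarith)
    have l3 : (24:ℝ) ≤ Real.sqrt n := by
      rw [show (24:ℝ) = Real.sqrt 576 by
        rw [show (576:ℝ) = 24^2 by norm_num, Real.sqrt_sq (by norm_num : (0:ℝ) ≤ 24)]]
      exact Real.sqrt_le_sqrt hn2
    have l4 : Real.sqrt n ^ 2 = (n:ℝ) := Real.sq_sqrt hnpos.le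
    have lnn : (0:ℝ) ≤ Real.log ((n:ℝ)+1) := Real.log_nonneg (by linarith)
    rw [le_div_iff₀ hSpos]
    nlinarith [l1, l2, l3, l4, hS, lnn,
      mul_le_mul_of_nonneg_right l1 hSpos.le,
      mul_le_mul_of_nonneg_right l3 (Real.sqrt_nonneg (n:ℝ)),
      sq_nonneg (S - 2)]
  have hErr : Err n = (4 * T * n + 3 * n) / S := by
    rw [Err]; ring
  rw [hErr]
  have e5 : ((4:ℝ) * T * n + 2 * n) / S + (n:ℝ)/S = (4 * T * n + 3 * n) / S := by
    field_simp; ring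
  clear_value S T Λ x0 U G Bd
  linarith [hLL, hfin, e5.le, e5.ge, hBddef.le, hBddef.ge]

noncomputable def dd (n : ℕ) : ℝ := LL (n+1) - LL n
noncomputable def tt (n : ℕ) : ℝ := Real.log n - Real.log (Real.log n)

lemma dd_mono : Monotone dd := by
  apply monotone_nat_of_le_succ
  intro n
  have h := bell_logconvex n
  have b0 : (0:ℝ) < (bell n : ℝ) := by exact_mod_cast bell_pos n
  have b1 : (0:ℝ) < (bell (n+1) : ℝ) := by exact_mod_cast bell_pos (n+1)
  have b2 : (0:ℝ) < (bell (n+2) : ℝ) := by exact_mod_cast bell_pos (n+2)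
  have hlog := Real.log_le_log (by positivity) h
  rw [Real.log_pow, Real.log_mul b0.ne' b2.ne'] at hlog
  simp only [dd, LL]
  push_cast at hlog
  linarith [hlog]

lemma window_ge (m h : ℕ) : (h:ℝ) * dd m ≤ LL (m + h) - LL m := by
  induction h with
  | zero => simp
  | succ h ih =>
    have e : LL (m + (h+1)) - LL m = dd (m+h) + (LL (m+h) - LL m) := by
      have : m + (h+1) = (m+h) + 1 := by omega
      rw [this, dd]
      ring
    have hm : dd m ≤ dd (m+h) := dd_mono (Nat.le_add_right m h)
    rw [e]
    push_cast
    linarith [ih, hm]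

lemma window_le (m h : ℕ) : LL (m + h) - LL m ≤ (h:ℝ) * dd (m + h) := by
  induction h with
  | zero => simp
  | succ h ih =>
    have e : LL (m + (h+1)) - LL m = dd (m+h) + (LL (m+h) - LL m) := by
      have : m + (h+1) = (m+h) + 1 := by omega
      rw [this, dd]
      ring
    have hm : dd (m+h) ≤ dd (m+(h+1)) := dd_mono (by omega)
    have hmul : (h:ℝ) * dd (m+h) ≤ (h:ℝ) * dd (m+(h+1)) :=
      mul_le_mul_of_nonneg_left hm (by positivity)
    rw [e]
    push_cast
    linarith [ih, hmul, hm]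

lemma tendsto_Err_div : Tendsto (fun n : ℕ => Err n / n) atTop (nhds 0) := by
  have h1 : Tendsto (fun n : ℕ => Real.log (Real.log n) / Real.log n) atTop (nhds 0) :=
    (Real.isLittleO_log_id_atTop.tendsto_div_nhds_zero).comp tendsto_log_nat
  have h2 : Tendsto (fun n : ℕ => (Real.log n)⁻¹) atTop (nhds 0) :=
    tendsto_log_nat.inv_tendsto_atTop
  have h3 : Tendsto (fun n : ℕ => 4 * (Real.log (Real.log n) / Real.log n)
      + 3 * (Real.log n)⁻¹) atTop (nhds (4 * 0 + 3 * 0)) :=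
    (h1.const_mul 4).add (h2.const_mul 3)
  rw [show (4:ℝ) * 0 + 3 * 0 = 0 by norm_num] at h3
  apply h3.congr'
  filter_upwards [eventually_ge_atTop 2, tendsto_log_nat.eventually_ge_atTop 1] with n hn hl
  have hnpos : (0:ℝ) < n := by positivity
  have hlpos : (0:ℝ) < Real.log n := by linarith
  rw [Err]
  field_simp

lemma dd_sub_tt : Tendsto (fun n : ℕ => dd n - tt n) atTop (nhds 0) := by
  rw [Metric.tendsto_atTop]
  intro ε hε
  set δ : ℝ := min (ε/20) (1/8) with hδdef
  have hδpos : 0 < δ := lt_min (by linarith) (by norm_num)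
  have hδε : δ ≤ ε/20 := min_le_left _ _
  have hδ8 : δ ≤ 1/8 := min_le_right _ _
  clear_value δ
  obtain ⟨N₁, hN₁⟩ := eventually_atTop.1 (LL_lower.and LL_upper)
  obtain ⟨N₂, hN₂⟩ := Metric.tendsto_atTop.1 tendsto_Err_div (δ^2) (by positivity)
  obtain ⟨N₃, hN₃⟩ := eventually_atTop.1 (tendsto_log_nat.eventually_ge_atTop (2/δ))
  obtain ⟨N₄, hN₄⟩ := eventually_atTop.1
    ((tendsto_natCast_atTop_atTop.const_mul_atTop hδpos).eventually_ge_atTop 1)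
  have hErrle : ∀ m : ℕ, N₂ ≤ m → 1 ≤ m → Err m ≤ δ^2 * m := by
    intro m h1 h2
    have := hN₂ m h1
    rw [Real.dist_eq, sub_zero] at this
    have h3 : Err m / m < δ^2 := (le_abs_self _).trans_lt this
    have mpos : (0:ℝ) < m := by exact_mod_cast h2
    rw [div_lt_iff₀ mpos] at h3
    linarith
  refine ⟨2*N₁ + 2*N₂ + 2*N₃ + N₄ + 16, fun n hn => ?_⟩
  -- basic quantities
  have hnN₁ : N₁ ≤ n := by omega
  have hnN₄ : N₄ ≤ n := by omega
  have hn16 : 16 ≤ n := by omega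
  have hnR : (16:ℝ) ≤ n := by exact_mod_cast hn16
  have hnpos : (0:ℝ) < n := by linarith
  have hδn1 : 1 ≤ δ * n := hN₄ n hnN₄
  set h : ℕ := ⌈δ * n⌉₊ with hhdef
  have hh1 : 1 ≤ h := Nat.one_le_ceil_iff.2 (by positivity)
  have hhlow : δ * n ≤ (h:ℝ) := Nat.le_ceil _
  have hhup : (h:ℝ) ≤ 2 * (δ * n) := by
    have := Nat.ceil_lt_add_one (show (0:ℝ) ≤ δ * n by positivity)
    linarith
  have hhpos : (0:ℝ) < h := by
    have : (0:ℝ) < δ * n := by positivity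
    linarith
  have hh4 : (h:ℝ) ≤ n / 4 := by nlinarith
  have hhn : h ≤ n := by
    have : (h:ℝ) ≤ (n:ℝ) := by linarith
    exact_mod_cast this
  set z : ℕ := n - h with hzdef
  have hzn : z + h = n := Nat.sub_add_cancel hhn
  have hzR : (z:ℝ) = (n:ℝ) - (h:ℝ) := by
    have : ((z + h : ℕ):ℝ) = (n:ℝ) := by rw [hzn]
    push_cast at this
    linarith
  clear_value h z
  have hz34 : (3:ℝ)/4 * n ≤ z := by rw [hzR]; linarith
  have hzhalf : (n:ℝ)/2 ≤ z := by linarith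
  have hznat : n/2 ≤ z := by
    have : ((n/2 : ℕ):ℝ) ≤ (z:ℝ) := le_trans (by
      have := Nat.cast_div_le (α := ℝ) (m := n) (n := 2)
      simpa using this) hzhalf
    exact_mod_cast this
  have hzN₁ : N₁ ≤ z := by omega
  have hzN₂ : N₂ ≤ z := by omega
  have hzN₃ : N₃ ≤ z := by omega
  have hz1 : 1 ≤ z := by omega
  have hz1R : (1:ℝ) ≤ (z:ℝ) := by exact_mod_cast hz1
  -- log facts
  have hlogn : 2/δ ≤ Real.log n := hN₃ n (by omega)
  have hδ16 : (16:ℝ) ≤ 2/δ := by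
    rw [le_div_iff₀ hδpos]; linarith
  have hlogn1 : 1 ≤ Real.log n := by linarith
  have hlogz : 2/δ ≤ Real.log z := hN₃ z hzN₃
  have hlogz1 : 1 ≤ Real.log z := by linarith
  have hlogzpos : (0:ℝ) < Real.log z := by linarith
  -- Err bounds
  have hErr_n : Err n ≤ δ^2 * n := hErrle n (by omega) (by omega)
  have hErr_z : Err z ≤ δ^2 * n := by
    have h1 := hErrle z hzN₂ hz1
    have hz_le : (z:ℝ) ≤ (n:ℝ) := by linarith [hzR, hhpos]
    calc Err z ≤ δ^2 * z := h1
      _ ≤ δ^2 * n := mul_le_mul_of_nonneg_left hz_le (sq_nonneg δ)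
  have hErr_nh : Err ((n:ℕ) + (h:ℕ) : ℕ) ≤ 2 * (δ^2 * n) := by
    have h1 := hErrle (n+h) (by omega) (by omega)
    have h2 : ((n + h:ℕ):ℝ) ≤ 2 * (n:ℝ) := by push_cast; linarith
    calc Err ((n + h:ℕ):ℝ) ≤ δ^2 * ((n+h:ℕ):ℝ) := h1
      _ ≤ δ^2 * (2 * (n:ℝ)) := mul_le_mul_of_nonneg_left h2 (sq_nonneg δ)
      _ = 2 * (δ^2 * n) := by ring
  -- LL bounds
  have hLn := hN₁ n hnN₁
  have hLz := hN₁ z hzN₁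
  have hLnh := hN₁ (n+h) (by omega)
  -- UPPER bound on dd n
  have hup : dd n - tt n ≤ 5 * δ := by
    have w := window_ge n h
    have hcast : ((n + h:ℕ):ℝ) = (n:ℝ) + (h:ℝ) := by push_cast; ring
    have fw := FW1 (x := (n:ℝ)) (y := (h:ℝ)) hlogn1 (by positivity) (by linarith)
    have u2 : LL (n+h) ≤ FF ((n:ℝ) + (h:ℝ)) + Err ((n:ℝ) + (h:ℝ)) := by
      have := hLnh.2
      rwa [hcast] at this
    have u3 : FF (n:ℝ) - Err (n:ℝ) ≤ LL n := hLn.1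
    have hErr_nh' : Err ((n:ℝ)+(h:ℝ)) ≤ 2 * (δ^2 * n) := by
      rw [← hcast]
      exact hErr_nh
    have key : (h:ℝ) * dd n ≤ (h:ℝ) * (tt n + (h:ℝ)/(n:ℝ)) + 3 * (δ^2 * n) := by
      have e1 : (h:ℝ) * ((Real.log n - Real.log (Real.log n)) + (h:ℝ)/(n:ℝ))
          = (h:ℝ) * (tt n + (h:ℝ)/(n:ℝ)) := by rw [tt]
      calc (h:ℝ) * dd n ≤ LL (n + h) - LL n := w
        _ ≤ FF ((n:ℝ)+(h:ℝ)) + Err ((n:ℝ)+(h:ℝ)) - (FF (n:ℝ) - Err (n:ℝ)) := by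
            linarith [u2, u3]
        _ ≤ (h:ℝ) * (tt n + (h:ℝ)/(n:ℝ)) + 3 * (δ^2 * n) := by
            rw [← e1]
            linarith [fw, hErr_nh', hErr_n]
    -- divide by h
    have hdiv : (h:ℝ)/(n:ℝ) ≤ 2 * δ := by
      rw [div_le_iff₀ hnpos]
      linarith
    have herr3 : 3 * (δ^2 * n) ≤ 3 * δ * h := by
      have p := mul_le_mul_of_nonneg_left hhlow (by positivity : (0:ℝ) ≤ 3*δ)
      linarith [p]
    have : (h:ℝ) * dd n ≤ (h:ℝ) * (tt n + 5 * δ) := by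
      have p := mul_le_mul_of_nonneg_left hdiv hhpos.le
      have e : (h:ℝ) * (tt n + (h:ℝ)/(n:ℝ)) = (h:ℝ) * tt n + (h:ℝ) * ((h:ℝ)/(n:ℝ)) := by ring
      have e2 : (h:ℝ) * (tt n + 5 * δ) = (h:ℝ) * tt n + 5 * δ * (h:ℝ) := by ring
      linarith [key, p, herr3, e.le, e.ge, e2.le, e2.ge]
    have := le_of_mul_le_mul_left (by linarith [this] : (h:ℝ) * dd n ≤ (h:ℝ) * (tt n + 5*δ)) hhpos
    linarith
  -- LOWER bound on dd n
  have hlow : -(7 * δ) ≤ dd n - tt n := by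
    have w := window_le z h
    rw [hzn] at w
    have hcast : ((z:ℝ) + (h:ℝ)) = (n:ℝ) := by rw [hzR]; ring
    have fw := FW2 (z := (z:ℝ)) (y := (h:ℝ)) hlogz1 (by positivity) hz1R
    rw [hcast] at fw
    have l2 : FF (n:ℝ) - Err (n:ℝ) ≤ LL n := hLn.1
    have l3 : LL z ≤ FF (z:ℝ) + Err (z:ℝ) := hLz.2
    have key : (h:ℝ) * tt n - (h:ℝ)^2/(z:ℝ) - (h:ℝ)/Real.log z - 2*(δ^2*n)
        ≤ (h:ℝ) * dd n := by
      have e1 : (h:ℝ) * (Real.log n - Real.log (Real.log n)) = (h:ℝ) * tt n := by rw [tt]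
      calc (h:ℝ) * tt n - (h:ℝ)^2/(z:ℝ) - (h:ℝ)/Real.log z - 2*(δ^2*n)
          ≤ FF (n:ℝ) - FF (z:ℝ) - Err (n:ℝ) - Err (z:ℝ) := by
            rw [← e1]
            linarith [fw, hErr_n, hErr_z]
        _ ≤ LL n - LL z := by linarith [l2, l3]
        _ ≤ (h:ℝ) * dd n := w
    have b1 : (h:ℝ)^2/(z:ℝ) ≤ 4 * δ * h := by
      rw [div_le_iff₀ (by linarith : (0:ℝ) < (z:ℝ))]
      have p1 : (h:ℝ)*(h:ℝ) ≤ 2*(δ*(n:ℝ))*(h:ℝ) := mul_le_mul_of_nonneg_right hhup hhpos.le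
      have p2 : 4*δ*(h:ℝ)*((n:ℝ)/2) ≤ 4*δ*(h:ℝ)*(z:ℝ) :=
        mul_le_mul_of_nonneg_left hzhalf (by positivity)
      linarith [p1, p2]
    have b2 : (h:ℝ)/Real.log z ≤ δ * h := by
      rw [div_le_iff₀ hlogzpos]
      have : 2/δ ≤ Real.log z := hlogz
      have h2 : (2:ℝ) ≤ δ * Real.log z := by
        rw [div_le_iff₀ hδpos] at this
        linarith [this]
      have p := mul_le_mul_of_nonneg_right h2 hhpos.le
      linarith [p]
    have b3 : 2*(δ^2*n) ≤ 2 * δ * h := by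
      have p := mul_le_mul_of_nonneg_left hhlow (by positivity : (0:ℝ) ≤ 2*δ)
      linarith [p]
    have : (h:ℝ) * (tt n - 7 * δ) ≤ (h:ℝ) * dd n := by
      have e : (h:ℝ) * (tt n - 7 * δ) = (h:ℝ) * tt n - 7 * δ * (h:ℝ) := by ring
      linarith [key, b1, b2, b3, e.le, e.ge]
    have := le_of_mul_le_mul_left (by linarith [this] : (h:ℝ) * (tt n - 7*δ) ≤ (h:ℝ) * dd n) hhpos
    linarith
  rw [Real.dist_eq, sub_zero]
  rw [abs_lt]
  constructor
  · linarith [hlow, hδε, hδpos, hε]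
  · linarith [hup, hδε, hδpos, hε]

lemma tendsto_inv_nat_sub (k : ℕ) :
    Tendsto (fun n : ℕ => (((n - k : ℕ) : ℝ))⁻¹) atTop (nhds 0) :=
  (tendsto_natCast_atTop_atTop.comp (tendsto_sub_atTop_nat k)).inv_tendsto_atTop

lemma tt_diff_bounds : ∀ᶠ n : ℕ in atTop,
    0 ≤ tt n - tt (n - 1) ∧ tt n - tt (n - 1) ≤ 2 * (((n - 1:ℕ):ℝ))⁻¹ := by
  filter_upwards [eventually_ge_atTop 3,
    (tendsto_log_nat.comp (tendsto_sub_atTop_nat 1)).eventually_ge_atTop 1] with n hn3 hlog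
  have h1 : (1:ℝ) ≤ Real.log ((n-1:ℕ):ℝ) := hlog
  have hc : ((n-1:ℕ):ℝ) = (n:ℝ) - 1 := by
    have h : (1:ℕ) ≤ n := by omega
    rw [Nat.cast_sub h, Nat.cast_one]
  have hn3R : (3:ℝ) ≤ (n:ℝ) := by exact_mod_cast hn3
  have hpos : (0:ℝ) < ((n-1:ℕ):ℝ) := by rw [hc]; linarith
  have hle : ((n-1:ℕ):ℝ) ≤ (n:ℝ) := by rw [hc]; linarith
  have l1 : Real.log ((n-1:ℕ):ℝ) ≤ Real.log n := Real.log_le_log hpos hle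
  have l2 : Real.log (Real.log ((n-1:ℕ):ℝ)) ≤ Real.log (Real.log n) :=
    Real.log_le_log (by linarith) l1
  have hd1 : Real.log n - Real.log ((n-1:ℕ):ℝ) ≤ (((n-1:ℕ):ℝ))⁻¹ := by
    have := log_add_le (x := ((n-1:ℕ):ℝ)) (y := 1) hpos (by norm_num)
    rw [hc] at this ⊢
    have e : (n:ℝ) - 1 + 1 = (n:ℝ) := by ring
    rw [e] at this
    rw [inv_eq_one_div]
    linarith
  have hd2 : Real.log (Real.log n) - Real.log (Real.log ((n-1:ℕ):ℝ))
      ≤ Real.log n - Real.log ((n-1:ℕ):ℝ) := by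
    have e1 : Real.log (Real.log n) - Real.log (Real.log ((n-1:ℕ):ℝ))
        = Real.log (Real.log n / Real.log ((n-1:ℕ):ℝ)) := by
      rw [Real.log_div (by linarith) (by linarith)]
    have e2 : Real.log (Real.log n / Real.log ((n-1:ℕ):ℝ))
        ≤ Real.log n / Real.log ((n-1:ℕ):ℝ) - 1 :=
      Real.log_le_sub_one_of_pos (div_pos (by linarith) (by linarith))
    have e3 : Real.log n / Real.log ((n-1:ℕ):ℝ) - 1
        = (Real.log n - Real.log ((n-1:ℕ):ℝ)) / Real.log ((n-1:ℕ):ℝ) :=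
      div_sub_one (by linarith)
    have e4 : (Real.log n - Real.log ((n-1:ℕ):ℝ)) / Real.log ((n-1:ℕ):ℝ)
        ≤ Real.log n - Real.log ((n-1:ℕ):ℝ) := by
      rw [div_le_iff₀ (by linarith)]
      nlinarith [l1, h1]
    linarith [e1.le, e1.ge, e2, e3.le, e4]
  constructor
  · rw [tt, tt]
    linarith [hd2]
  · rw [tt, tt]
    have : (((n-1:ℕ):ℝ))⁻¹ ≤ 2 * (((n-1:ℕ):ℝ))⁻¹ := by
      have : (0:ℝ) < (((n-1:ℕ):ℝ))⁻¹ := by positivity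
      linarith
    linarith [hd1, l2, hd2, this]

lemma tt_diff : Tendsto (fun n : ℕ => tt n - tt (n - 1)) atTop (nhds 0) := by
  have hb : Tendsto (fun n : ℕ => 2 * (((n - 1 : ℕ):ℝ))⁻¹) atTop (nhds 0) := by
    simpa using (tendsto_inv_nat_sub 1).const_mul 2
  exact tendsto_of_tendsto_of_tendsto_of_le_of_le' tendsto_const_nhds hb
    (tt_diff_bounds.mono (fun n h => h.1)) (tt_diff_bounds.mono (fun n h => h.2))

/-- the m = 1 case -/
lemma ratio1 : Tendsto (fun n : ℕ =>
    (bell (n-1) : ℝ) * (n:ℝ) / ((bell n : ℝ) * Real.log n)) atTop (nhds 1) := by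
  -- log of the ratio tends to 0
  have hdd : Tendsto (fun n : ℕ => dd (n-1) - tt (n-1)) atTop (nhds 0) :=
    dd_sub_tt.comp (tendsto_sub_atTop_nat 1)
  have hlog : Tendsto (fun n : ℕ => -(dd (n-1) - tt (n-1)) + (tt n - tt (n-1))) atTop (nhds 0) := by
    have := (hdd.neg).add tt_diff
    simpa using this
  have heq : ∀ᶠ n : ℕ in atTop,
      Real.exp (-(dd (n-1) - tt (n-1)) + (tt n - tt (n-1)))
        = (bell (n-1) : ℝ) * (n:ℝ) / ((bell n : ℝ) * Real.log n) := by
    filter_upwards [eventually_ge_atTop 3,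
      tendsto_log_nat.eventually_ge_atTop 1] with n hn3 hl1
    have hn1 : (n - 1) + 1 = n := by omega
    have hb0 : (0:ℝ) < (bell (n-1) : ℝ) := by exact_mod_cast bell_pos (n-1)
    have hb1 : (0:ℝ) < (bell n : ℝ) := by exact_mod_cast bell_pos n
    have hnR : (0:ℝ) < (n:ℝ) := by
      have : (3:ℝ) ≤ (n:ℝ) := by exact_mod_cast hn3
      linarith
    have hlpos : (0:ℝ) < Real.log n := by linarith
    have e1 : -(dd (n-1) - tt (n-1)) + (tt n - tt (n-1)) = tt n - dd (n-1) := by ring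
    have e2 : dd (n-1) = LL n - LL (n-1) := by
      rw [dd, hn1]
    rw [e1, e2, tt, LL, LL]
    rw [Real.exp_sub, Real.exp_sub, Real.exp_sub, Real.exp_log hnR, Real.exp_log hlpos,
      Real.exp_log hb1, Real.exp_log hb0]
    rw [div_div_eq_mul_div]
    rw [div_eq_div_iff (by positivity) (by positivity)]
    field_simp
  have := (Real.continuous_exp.tendsto 0).comp hlog
  rw [Real.exp_zero] at this
  exact this.congr' heq

lemma tendsto_inv_nat : Tendsto (fun n : ℕ => ((n:ℝ))⁻¹) atTop (nhds 0) :=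
  tendsto_natCast_atTop_atTop.inv_tendsto_atTop

lemma hB_lim (m : ℕ) (hm : 1 ≤ m) : Tendsto (fun n : ℕ => ((n:ℝ) * Real.log ((n-m:ℕ):ℝ))
    / (((n-m:ℕ):ℝ) * Real.log n)) atTop (nhds 1) := by
  have hup : Tendsto (fun n : ℕ => 1 + 2*(m:ℝ) * ((n:ℝ))⁻¹) atTop (nhds 1) := by
    have := (tendsto_inv_nat.const_mul (2*(m:ℝ))).const_add 1
    simpa using this
  have hlo : Tendsto (fun n : ℕ => 1 - 2*(m:ℝ) * ((n:ℝ))⁻¹) atTop (nhds 1) := by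
    have := (tendsto_inv_nat.const_mul (2*(m:ℝ))).const_sub 1
    simpa using this
  apply tendsto_of_tendsto_of_tendsto_of_le_of_le' hlo hup
  all_goals
    filter_upwards [eventually_ge_atTop (2*m + 2),
      (tendsto_log_nat.comp (tendsto_sub_atTop_nat m)).eventually_ge_atTop 1,
      tendsto_log_nat.eventually_ge_atTop 1] with n hn hlogc hlogn
  all_goals
    have hmn : m ≤ n := by omega
    have hc : ((n-m:ℕ):ℝ) = (n:ℝ) - m := by
      rw [Nat.cast_sub hmn]
    have hnR : (2*(m:ℝ) + 2) ≤ (n:ℝ) := by exact_mod_cast hn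
    have hmR : (1:ℝ) ≤ (m:ℝ) := by exact_mod_cast hm
    have hnpos : (0:ℝ) < n := by linarith
    have hcpos : (0:ℝ) < ((n-m:ℕ):ℝ) := by rw [hc]; linarith
    have hchalf : (n:ℝ)/2 ≤ ((n-m:ℕ):ℝ) := by rw [hc]; linarith
    have hcn : ((n-m:ℕ):ℝ) ≤ (n:ℝ) := by rw [hc]; linarith
    have hlogcn : Real.log ((n-m:ℕ):ℝ) ≤ Real.log n := Real.log_le_log hcpos hcn
    have hlogc' : (1:ℝ) ≤ Real.log ((n-m:ℕ):ℝ) := hlogc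
    have hlogn0 : (0:ℝ) < Real.log n := by linarith
    have hlogc0 : (0:ℝ) < Real.log ((n-m:ℕ):ℝ) := by linarith [hlogc']
  · -- lower bound
    have l1 : Real.log ((n-m:ℕ):ℝ) / Real.log n
        ≤ ((n:ℝ) * Real.log ((n-m:ℕ):ℝ)) / (((n-m:ℕ):ℝ) * Real.log n) := by
      rw [div_le_div_iff₀ hlogn0 (by positivity)]
      have := mul_le_mul_of_nonneg_left hcn (mul_nonneg hlogc0.le hlogn0.le)
      nlinarith [this]
    have l2 : Real.log n ≤ Real.log ((n-m:ℕ):ℝ) + (m:ℝ)/((n-m:ℕ):ℝ) := by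
      have h := log_add_le (x := ((n-m:ℕ):ℝ)) (y := (m:ℝ)) hcpos (by positivity)
      have e : ((n-m:ℕ):ℝ) + (m:ℝ) = (n:ℝ) := by rw [hc]; ring
      rwa [e] at h
    have l3 : (m:ℝ)/((n-m:ℕ):ℝ) ≤ 2*(m:ℝ)*((n:ℝ))⁻¹ := by
      rw [div_le_iff₀ hcpos, mul_assoc, mul_comm ((n:ℝ))⁻¹ _, ← mul_assoc]
      have e : 2*(m:ℝ)*((n-m:ℕ):ℝ)*((n:ℝ))⁻¹ = 2*(m:ℝ)*(((n-m:ℕ):ℝ)/(n:ℝ)) := by ring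
      rw [e]
      have : (1:ℝ)/2 ≤ ((n-m:ℕ):ℝ)/(n:ℝ) := by
        rw [div_le_div_iff₀ (by norm_num) hnpos]
        linarith
      nlinarith [hmR]
    have l4 : 1 - 2*(m:ℝ)*((n:ℝ))⁻¹ ≤ Real.log ((n-m:ℕ):ℝ) / Real.log n := by
      rw [le_div_iff₀ hlogn0]
      have h5 : (2*(m:ℝ)*((n:ℝ))⁻¹) * Real.log n ≥ 2*(m:ℝ)*((n:ℝ))⁻¹ := by
        have : (0:ℝ) ≤ 2*(m:ℝ)*((n:ℝ))⁻¹ := by positivity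
        nlinarith [hlogn]
      nlinarith [l2, l3, h5]
    linarith [l1, l4]
  · -- upper bound
    have u1 : ((n:ℝ) * Real.log ((n-m:ℕ):ℝ)) / (((n-m:ℕ):ℝ) * Real.log n)
        ≤ (n:ℝ) / ((n-m:ℕ):ℝ) := by
      rw [div_le_div_iff₀ (by positivity) hcpos]
      have := mul_le_mul_of_nonneg_left hlogcn (by positivity : (0:ℝ) ≤ (n:ℝ) * ((n-m:ℕ):ℝ))
      nlinarith [this]
    have u2 : (n:ℝ) / ((n-m:ℕ):ℝ) ≤ 1 + 2*(m:ℝ)*((n:ℝ))⁻¹ := by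
      rw [div_le_iff₀ hcpos]
      have e : (1 + 2*(m:ℝ)*((n:ℝ))⁻¹) * ((n-m:ℕ):ℝ)
          = ((n-m:ℕ):ℝ) + 2*(m:ℝ)*(((n-m:ℕ):ℝ)/(n:ℝ)) := by ring
      rw [e, hc]
      have h6 : (1:ℝ)/2 ≤ ((n:ℝ) - m)/(n:ℝ) := by
        rw [div_le_div_iff₀ (by norm_num) hnpos]
        linarith
      have h7 : 2*(m:ℝ)*(((n:ℝ) - (m:ℝ))/(n:ℝ)) ≥ (m:ℝ) := by nlinarith [hmR, h6]
      rw [hc] at *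
      linarith [h7]
    linarith [u1, u2]

/-- For every fixed `m ∈ ℕ = {1,2,…}`, as `n → ∞` one has
`b_{n-m}/bₙ ∼ (log n / n)^m`, i.e. `b_{n-m}·n^m / (bₙ·(log n)^m) → 1`. -/
theorem bell_ratio_asymptotics (m : ℕ) (hm : 1 ≤ m) :
    Tendsto (fun n : ℕ =>
        ((bell (n - m) : ℝ) * (n : ℝ) ^ m) / ((bell n : ℝ) * Real.log n ^ m))
      atTop (nhds 1) := by
  induction m, hm using Nat.le_induction with
  | base => simpa using ratio1
  | succ m hm ih =>
    have hA : Tendsto (fun n : ℕ => (bell ((n - m) - 1) : ℝ) * ((n - m:ℕ):ℝ)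
        / ((bell (n - m) : ℝ) * Real.log ((n-m:ℕ):ℝ))) atTop (nhds 1) :=
      ratio1.comp (tendsto_sub_atTop_nat m)
    have hB := hB_lim m hm
    have hmul := (ih.mul hA).mul hB
    rw [show ((1:ℝ)*1)*1 = 1 by norm_num] at hmul
    apply hmul.congr'
    filter_upwards [eventually_ge_atTop (2*m + 4),
      (tendsto_log_nat.comp (tendsto_sub_atTop_nat m)).eventually_ge_atTop 1,
      tendsto_log_nat.eventually_ge_atTop 1] with n hn hlogc hlogn
    have hmn : m ≤ n := by omega
    have hcpos : (0:ℝ) < ((n-m:ℕ):ℝ) := by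
      have : 1 ≤ n - m := by omega
      exact_mod_cast Nat.lt_of_lt_of_le Nat.zero_lt_one this
    have hnpos : (0:ℝ) < (n:ℝ) := by
      have : 1 ≤ n := by omega
      exact_mod_cast Nat.lt_of_lt_of_le Nat.zero_lt_one this
    have hb0 : (0:ℝ) < (bell (n - m) : ℝ) := by exact_mod_cast bell_pos (n-m)
    have hb1 : (0:ℝ) < (bell n : ℝ) := by exact_mod_cast bell_pos n
    have hlogc' : (1:ℝ) ≤ Real.log ((n-m:ℕ):ℝ) := hlogc
    have hlogn0 : (0:ℝ) < Real.log n := by linarith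
    have hlogc0 : (0:ℝ) < Real.log ((n-m:ℕ):ℝ) := by linarith [hlogc']
    have hsub : n - (m+1) = (n - m) - 1 := by omega
    rw [hsub, pow_succ, pow_succ]
    set a := (bell (n - m - 1) : ℝ) with ha
    set b := (bell (n - m) : ℝ) with hb
    set Bq := (bell n : ℝ) with hBq
    set L := Real.log ((n:ℕ):ℝ) with hL
    set l := Real.log ((n-m:ℕ):ℝ) with hl
    set c := ((n-m:ℕ):ℝ) with hcc
    rw [div_mul_div_comm, div_mul_div_comm]
    rw [div_eq_div_iff (by positivity) (by positivity)]
    ring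
end

section
/- Fix k ∈ ℕ and let i_{n,k} = Σ ∏_{j=1}^{m} 1/(a_j!), where the sum ranges over all compositions (a_1,…,a_m) of n with 1 ≤ a_j ≤ k for every j. Then i_{n,k} equals the coefficient of x^n in the power series 1/(1 − Σ_{i=1}^{k} x^i/i!), and there is a constant c_k > 0 such that i_{n,k} ∼ c_k · (1/α_k)^n as n → ∞, where α_k is the unique root of Σ_{i=1}^{k} x^i/i! − 1 in (0,1]. -/
open Filter PowerSeries

/-- `ink n k` = `i_{n,k}`: the sum, over all compositions `(a₁,…,a_m)` of `n`
with `1 ≤ aⱼ ≤ k` for every `j`, of `∏ⱼ 1/(aⱼ!)`. -/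
noncomputable def ink (n k : ℕ) : ℝ :=
  ∑' l : {l : List ℕ // l.sum = n ∧ ∀ a ∈ l, 1 ≤ a ∧ a ≤ k},
    (l.1.map (fun a => (1 : ℝ) / a.factorial)).prod

section Aux
abbrev TT (k n : ℕ) := {l : List ℕ // l.sum = n ∧ ∀ a ∈ l, 1 ≤ a ∧ a ≤ k}

instance TT.finite (k n : ℕ) : Finite (TT k n) := by
  apply Finite.of_injective (fun l => (⟨l.1, fun {i} hi => (l.2.2 i hi).1, l.2.1⟩ : Composition n))
  intro a b h
  exact Subtype.ext (congrArg Composition.blocks h)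

lemma ink_zero (k : ℕ) : ink 0 k = 1 := by
  rw [ink, tsum_eq_single (⟨[], by simp⟩ : TT k 0)]
  · simp
  · rintro ⟨l, hl, hl2⟩ hb
    exact absurd (Subtype.ext (by
      rcases l with _ | ⟨a, t⟩
      · rfl
      · exact absurd hl (by have := (hl2 a (by simp)).1; simp; omega))) hb

def consEquiv (k n : ℕ) :
    TT k (n+1) ≃ Σ i : (Finset.Icc 1 (min k (n+1)) : Finset ℕ), TT k (n+1-i) where
  toFun l := match l with
    | ⟨[], h⟩ => absurd h.1 (by simp)
    | ⟨a :: t, h⟩ =>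
      ⟨⟨a, by
        have h1 := h.2 a (by simp)
        have h2 : a + t.sum = n + 1 := by simpa using h.1
        simp only [Finset.mem_Icc, le_min_iff]
        omega⟩,
       ⟨t, by
        have h2 : a + t.sum = n + 1 := by simpa using h.1
        exact ⟨show t.sum = n + 1 - a by omega, fun b hb => h.2 b (by simp [hb])⟩⟩⟩
  invFun := fun ⟨⟨i, hi⟩, ⟨t, ht⟩⟩ =>
    ⟨i :: t, by
      simp only [Finset.mem_Icc, le_min_iff] at hi
      obtain ⟨ht1, ht2⟩ := ht
      refine ⟨by simp only [List.sum_cons, ht1]; omega, ?_⟩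
      intro b hb
      rcases List.mem_cons.1 hb with rfl | hb
      · exact ⟨hi.1, hi.2.1⟩
      · exact ht2 b hb⟩
  left_inv l := by
    rcases l with ⟨_ | ⟨a, t⟩, h⟩
    · exact absurd h.1 (by simp)
    · rfl
  right_inv x := by
    rcases x with ⟨⟨i, hi⟩, ⟨t, ht⟩⟩
    rfl

lemma ink_rec (k n : ℕ) :
    ink (n+1) k = ∑ i ∈ Finset.Icc 1 (min k (n+1)),
      ((1 : ℝ) / i.factorial) * ink (n+1-i) k := by
  rw [ink, ← Equiv.tsum_eq (consEquiv k n).symm,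
    Summable.tsum_sigma (f := fun x => _) (Summable.of_finite),
    ← Finset.tsum_subtype]
  congr 1
  funext i
  rw [ink, ← tsum_mul_left]
  congr 1

variable (k : ℕ)


noncomputable def Sk : PowerSeries ℝ :=
  ∑ i ∈ Finset.Icc 1 k, PowerSeries.C (R := ℝ) ((1 : ℝ) / (Nat.factorial i : ℝ)) * (PowerSeries.X : PowerSeries ℝ) ^ i

lemma coeff_Sk (j : ℕ) : coeff j (Sk k) = if j ∈ Finset.Icc 1 k then (1 : ℝ) / j.factorial else 0 := by
  rw [Sk, map_sum]
  rw [Finset.sum_congr rfl (fun i _ => by rw [coeff_C_mul, coeff_X_pow])]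
  simp [Finset.sum_ite_eq' (Finset.Icc 1 k) j (fun i => (1:ℝ)/i.factorial), eq_comm]

lemma constCoeff_Sk : constantCoeff (Sk k) = 0 := by
  have := coeff_Sk k 0
  simpa [coeff_zero_eq_constantCoeff] using this

lemma constCoeff_one_sub : constantCoeff (1 - Sk k) = 1 := by
  simp [constCoeff_Sk]

noncomputable def ck (n : ℕ) : ℝ := coeff n (1 - Sk k)⁻¹

lemma ck_zero : ck k 0 = 1 := by
  rw [ck, coeff_zero_eq_constantCoeff, PowerSeries.constantCoeff_inv, constCoeff_one_sub]
  norm_num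

lemma ck_rec (n : ℕ) : ck k (n+1) = ∑ i ∈ Finset.Icc 1 (min k (n+1)),
    ((1 : ℝ) / i.factorial) * ck k (n+1-i) := by
  have hunit : constantCoeff (1 - Sk k) ≠ 0 := by rw [constCoeff_one_sub]; norm_num
  have hmul : (1 - Sk k) * (1 - Sk k)⁻¹ = 1 := PowerSeries.mul_inv_cancel _ hunit
  have := congrArg (coeff (n+1)) hmul
  rw [coeff_mul, Finset.Nat.sum_antidiagonal_eq_sum_range_succ_mk, coeff_one] at this
  simp only [Nat.succ_ne_zero, if_false] at this
  rw [Finset.sum_range_succ'] at this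
  have h0 : (coeff 0) (1 - Sk k) = 1 := by
    simpa [coeff_zero_eq_constantCoeff] using constCoeff_one_sub k
  have hc : ∀ i : ℕ, coeff (i+1) (1 - Sk k)
      = -(if i+1 ≤ k then (1:ℝ)/(i+1).factorial else 0) := by
    intro i
    rw [map_sub, coeff_Sk]
    simp [coeff_one, Finset.mem_Icc]
  simp only [hc, h0, one_mul, Nat.succ_sub_succ] at this
  have key : ck k (n+1) = ∑ i ∈ Finset.range (n+1),
      (if i+1 ≤ k then (1:ℝ)/(i+1).factorial else 0) * ck k (n-i) := by
    have := this
    simp only [neg_mul, Finset.sum_neg_distrib, Nat.sub_zero] at this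
    simp only [ck]
    linarith
  rw [key]
  have hre : ∑ i ∈ Finset.range (n+1),
      (if i+1 ≤ k then (1:ℝ)/(i+1).factorial else 0) * ck k (n-i)
      = ∑ j ∈ Finset.Icc 1 (n+1), (if j ≤ k then (1:ℝ)/(j).factorial else 0) * ck k (n+1-j) := by
    rw [show Finset.Icc 1 (n+1) = Finset.Ico 1 (n+2) by rfl, Finset.sum_Ico_eq_sum_range]
    apply Finset.sum_congr (by norm_num)
    intro i _
    have h2 : n + 1 - (i + 1) = n - i := by omega
    rw [add_comm 1 i, h2]
  rw [hre]
  rw [← Finset.sum_subset (Finset.Icc_subset_Icc_right (min_le_right k (n+1)))]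
  · apply Finset.sum_congr rfl
    intro j hj
    simp only [Finset.mem_Icc, le_min_iff] at hj
    rw [if_pos hj.2.1]
  · intro j hj hj2
    simp only [Finset.mem_Icc, le_min_iff] at hj hj2
    rw [if_neg (by omega), zero_mul]
lemma renewal (k : ℕ) (hk : 1 ≤ k) (p : ℕ → ℝ) (hp : ∀ i ∈ Finset.Icc 1 k, 0 < p i)
    (hps : ∑ i ∈ Finset.Icc 1 k, p i = 1) (u : ℕ → ℝ) (hu0 : u 0 = 1)
    (hrec : ∀ n : ℕ, u (n+1) = ∑ i ∈ Finset.Icc 1 (min k (n+1)), p i * u (n+1-i)) :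
    ∃ c : ℝ, 0 < c ∧ Tendsto u atTop (nhds c) := by
  -- positivity of u
  have upos : ∀ n, 0 < u n := by
    intro n
    induction n using Nat.strong_induction_on with
    | _ n ih =>
      match n with
      | 0 => rw [hu0]; norm_num
      | (m+1) =>
        rw [hrec m]
        apply Finset.sum_pos
        · intro i hi
          simp only [Finset.mem_Icc, le_min_iff] at hi
          exact mul_pos (hp i (Finset.mem_Icc.2 ⟨hi.1, hi.2.1⟩)) (ih (m+1-i) (by omega))
        · exact ⟨1, by simp [Finset.mem_Icc]; omega⟩
  -- full recurrence
  have hfull : ∀ n : ℕ, k ≤ n + 1 → u (n+1) = ∑ i ∈ Finset.Icc 1 k, p i * u (n+1-i) := by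
    intro n hn
    rw [hrec n, min_eq_left hn]
  -- windows
  have hne : ∀ n : ℕ, (Finset.Ico n (n+k)).Nonempty := fun n => ⟨n, by simp; omega⟩
  set M : ℕ → ℝ := fun n => (Finset.Ico n (n+k)).sup' (hne n) u with hM
  set m : ℕ → ℝ := fun n => (Finset.Ico n (n+k)).inf' (hne n) u with hm
  have hp0 : ∀ i ∈ Finset.Icc 1 k, 0 ≤ p i := fun i hi => (hp i hi).le
  -- key window bound
  have keyM : ∀ n, u (n+k) ≤ M n := by
    intro n
    have h1 : n + k = (n + k - 1) + 1 := by omega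
    rw [h1, hfull (n+k-1) (by omega)]
    calc ∑ i ∈ Finset.Icc 1 k, p i * u (n+k-1+1-i)
        ≤ ∑ i ∈ Finset.Icc 1 k, p i * M n := by
          apply Finset.sum_le_sum
          intro i hi
          simp only [Finset.mem_Icc] at hi
          have : n + k - 1 + 1 - i ∈ Finset.Ico n (n+k) := by simp [Finset.mem_Ico]; omega
          exact mul_le_mul_of_nonneg_left (Finset.le_sup' u this) (hp0 i (Finset.mem_Icc.2 hi))
      _ = M n := by rw [← Finset.sum_mul, hps, one_mul]
  have keym : ∀ n, m n ≤ u (n+k) := by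
    intro n
    have h1 : n + k = (n + k - 1) + 1 := by omega
    rw [h1, hfull (n+k-1) (by omega)]
    calc m n = ∑ i ∈ Finset.Icc 1 k, p i * m n := by rw [← Finset.sum_mul, hps, one_mul]
      _ ≤ ∑ i ∈ Finset.Icc 1 k, p i * u (n+k-1+1-i) := by
          apply Finset.sum_le_sum
          intro i hi
          simp only [Finset.mem_Icc] at hi
          have : n + k - 1 + 1 - i ∈ Finset.Ico n (n+k) := by simp [Finset.mem_Ico]; omega
          exact mul_le_mul_of_nonneg_left (Finset.inf'_le u this) (hp0 i (Finset.mem_Icc.2 hi))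
  -- monotonicity
  have Manti : Antitone M := by
    apply antitone_nat_of_succ_le
    intro n
    apply Finset.sup'_le
    intro j hj
    simp only [Finset.mem_Ico] at hj
    rcases eq_or_lt_of_le (Nat.lt_succ_iff.mp (by omega : j < n + k + 1)) with rfl | hlt
    · exact keyM n
    · exact Finset.le_sup' u (by simp [Finset.mem_Ico]; omega)
  have mmono : Monotone m := by
    apply monotone_nat_of_le_succ
    intro n
    apply Finset.le_inf'
    intro j hj
    simp only [Finset.mem_Ico] at hj
    rcases eq_or_lt_of_le (Nat.lt_succ_iff.mp (by omega : j < n + k + 1)) with rfl | hlt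
    · exact keym n
    · exact Finset.inf'_le u (by simp [Finset.mem_Ico]; omega)
  have hmem : ∀ n, n ∈ Finset.Ico n (n+k) := fun n => by simp [Finset.mem_Ico]; omega
  have hmu : ∀ n, m n ≤ u n := fun n => Finset.inf'_le u (hmem n)
  have huM : ∀ n, u n ≤ M n := fun n => Finset.le_sup' u (hmem n)
  have hmM : ∀ n, m n ≤ M n := fun n => (hmu n).trans (huM n)
  -- global bound: u j ≤ M s for j ≥ s
  have hglob : ∀ s j, s ≤ j → u j ≤ M s := fun s j hsj => (huM j).trans (Manti hsj)
  -- convergence of M and m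
  have Mbdd : BddBelow (Set.range M) := ⟨m 0, by rintro x ⟨n, rfl⟩; exact (mmono (Nat.zero_le n)).trans (hmM n)⟩
  have mbdd : BddAbove (Set.range m) := ⟨M 0, by rintro x ⟨n, rfl⟩; exact (hmM n).trans (Manti (Nat.zero_le n))⟩
  set L : ℝ := ⨅ n, M n with hL
  set a : ℝ := ⨆ n, m n with ha
  have hMt : Tendsto M atTop (nhds L) := tendsto_atTop_ciInf Manti Mbdd
  have hmt : Tendsto m atTop (nhds a) := tendsto_atTop_ciSup mmono mbdd
  have hLM : ∀ n, L ≤ M n := fun n => ciInf_le Mbdd n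
  have ham : ∀ n, m n ≤ a := fun n => le_ciSup mbdd n
  have haL : a ≤ L := le_of_tendsto_of_tendsto' hmt hMt hmM
  -- facts about p 1
  have h1mem : (1 : ℕ) ∈ Finset.Icc 1 k := Finset.mem_Icc.2 ⟨le_refl 1, hk⟩
  have hp1 : 0 < p 1 := hp 1 h1mem
  have hp1le : p 1 ≤ 1 := by
    rw [← hps]
    exact Finset.single_le_sum hp0 h1mem
  -- the key inequality: L ≤ (1 - p1^k) * M s + p1^k * a for every s
  have hkey : ∀ s : ℕ, L ≤ (1 - p 1 ^ k) * M s + p 1 ^ k * a := by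
    intro s
    obtain ⟨j, hjmem, hjval⟩ := Finset.exists_mem_eq_inf' (hne (s+k)) u
    simp only [Finset.mem_Ico] at hjmem
    have hjs : s + k ≤ j := hjmem.1
    have hja : u j ≤ a := by rw [← hjval]; exact ham (s+k)
    have hujM : u j ≤ M s := hglob s j (by omega)
    have claim : ∀ t, t ≤ k → u (j + t) ≤ M s - p 1 ^ t * (M s - u j) := by
      intro t
      induction t with
      | zero => intro _; simp
      | succ t ih =>
        intro ht
        have iht := ih (by omega)
        have hj1 : j + (t + 1) = (j + t) + 1 := by omega
        rw [hj1, hfull (j + t) (by omega)]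
        rw [← Finset.add_sum_erase _ _ h1mem]
        have e1 : j + t + 1 - 1 = j + t := by omega
        rw [e1]
        have hbound : ∑ i ∈ (Finset.Icc 1 k).erase 1, p i * u (j + t + 1 - i)
            ≤ ∑ i ∈ (Finset.Icc 1 k).erase 1, p i * M s := by
          apply Finset.sum_le_sum
          intro i hi
          have hi2 := Finset.mem_of_mem_erase hi
          simp only [Finset.mem_Icc] at hi2
          exact mul_le_mul_of_nonneg_left (hglob s _ (by omega))
            (hp0 i (Finset.mem_of_mem_erase hi))
        have hsum2 : ∑ i ∈ (Finset.Icc 1 k).erase 1, p i = 1 - p 1 := by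
          have := Finset.add_sum_erase _ p h1mem
          rw [hps] at this
          linarith
        have h3 : ∑ i ∈ (Finset.Icc 1 k).erase 1, p i * M s = (1 - p 1) * M s := by
          rw [← Finset.sum_mul, hsum2]
        have h4 : p 1 * u (j + t) ≤ p 1 * (M s - p 1 ^ t * (M s - u j)) :=
          mul_le_mul_of_nonneg_left iht hp1.le
        have h5 : p 1 ^ (t+1) = p 1 * p 1 ^ t := by ring
        calc p 1 * u (j + t) + ∑ i ∈ (Finset.Icc 1 k).erase 1, p i * u (j + t + 1 - i)
            ≤ p 1 * (M s - p 1 ^ t * (M s - u j)) + (1 - p 1) * M s := by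
              rw [← h3]; exact add_le_add h4 hbound
          _ = M s - p 1 ^ (t+1) * (M s - u j) := by rw [h5]; ring
    have hMj : M (j + 1) ≤ M s - p 1 ^ k * (M s - u j) := by
      apply Finset.sup'_le
      intro x hx
      simp only [Finset.mem_Ico] at hx
      obtain ⟨t, ht1, ht2, rfl⟩ : ∃ t, 1 ≤ t ∧ t ≤ k ∧ x = j + t :=
        ⟨x - j, by omega, by omega, by omega⟩
      calc u (j + t) ≤ M s - p 1 ^ t * (M s - u j) := claim t ht2
        _ ≤ M s - p 1 ^ k * (M s - u j) := by
            have hpow : p 1 ^ k ≤ p 1 ^ t := pow_le_pow_of_le_one hp1.le hp1le ht2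
            nlinarith [sub_nonneg.2 hujM]
    calc L ≤ M (j + 1) := hLM (j + 1)
      _ ≤ M s - p 1 ^ k * (M s - u j) := hMj
      _ ≤ (1 - p 1 ^ k) * M s + p 1 ^ k * a := by nlinarith [pow_pos hp1 k]
  -- pass to the limit
  have hLa : L ≤ a := by
    have htend : Tendsto (fun s => (1 - p 1 ^ k) * M s + p 1 ^ k * a) atTop
        (nhds ((1 - p 1 ^ k) * L + p 1 ^ k * a)) :=
      ((hMt.const_mul _).add_const _)
    have := ge_of_tendsto' htend hkey
    nlinarith [pow_pos hp1 k]
  have hLeq : a = L := le_antisymm haL hLa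
  refine ⟨L, ?_, ?_⟩
  · have hm0 : 0 < m 0 := by
      rw [hm]
      exact (Finset.lt_inf'_iff (hne 0)).2 (fun i _ => upos i)
    calc (0:ℝ) < m 0 := hm0
      _ ≤ a := ham 0
      _ = L := hLeq
  · rw [hLeq] at hmt
    exact tendsto_of_tendsto_of_tendsto_of_le_of_le hmt hMt hmu huM

end Aux

lemma ink_eq_ck (k n : ℕ) : ink n k = ck k n := by
  induction n using Nat.strong_induction_on with
  | _ n ih =>
    match n with
    | 0 => rw [ink_zero, ck_zero]
    | (m+1) =>
      rw [ink_rec, ck_rec]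
      apply Finset.sum_congr rfl
      intro i hi
      simp only [Finset.mem_Icc, le_min_iff] at hi
      rw [ih (m+1-i) (by omega)]

/-- Fix `k ∈ ℕ = {1,2,…}` and let `i_{n,k} = ∑ ∏ⱼ 1/(aⱼ!)` over all compositions of `n`
with parts in `{1,…,k}`. Then `i_{n,k}` is the coefficient of `xⁿ` in
`1/(1 - ∑_{i=1}^k x^i/i!)`, and `i_{n,k} ∼ c_k (1/α_k)ⁿ` for some constant `c_k > 0`,
where `α_k` is the unique root of `∑_{i=1}^k x^i/i! - 1` in `(0,1]`. -/
theorem ink_coeff_and_asymptotics (k : ℕ) (hk : 1 ≤ k)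
    (α : ℝ) (hα : α ∈ Set.Ioc (0 : ℝ) 1)
    (hroot : ∑ i ∈ Finset.Icc 1 k, α ^ i / (Nat.factorial i : ℝ) - 1 = 0) :
    (∀ n : ℕ, ink n k =
      PowerSeries.coeff (R := ℝ) n
        (1 - ∑ i ∈ Finset.Icc 1 k,
          PowerSeries.C (R := ℝ) ((1 : ℝ) / (Nat.factorial i : ℝ)) * (PowerSeries.X : PowerSeries ℝ) ^ i)⁻¹) ∧
    ∃ c : ℝ, 0 < c ∧
      Tendsto (fun n : ℕ => ink n k / (1 / α) ^ n) atTop (nhds c) := by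
  obtain ⟨hα0, hα1⟩ := hα
  constructor
  · intro n
    rw [ink_eq_ck]
    rfl
  · have hαne : α ≠ 0 := ne_of_gt hα0
    have hrec : ∀ n : ℕ, ink (n+1) k * α ^ (n+1) = ∑ i ∈ Finset.Icc 1 (min k (n+1)),
        (α ^ i / (Nat.factorial i : ℝ)) * (ink (n+1-i) k * α ^ (n+1-i)) := by
      intro n
      rw [ink_rec, Finset.sum_mul]
      apply Finset.sum_congr rfl
      intro i hi
      simp only [Finset.mem_Icc, le_min_iff] at hi
      have hpow : α ^ (n+1) = α ^ i * α ^ (n+1-i) := by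
        rw [← pow_add]
        congr 1
        omega
      rw [hpow]
      ring
    obtain ⟨c, hc, htend⟩ := renewal k hk (fun i => α ^ i / (Nat.factorial i : ℝ))
      (fun i _ => div_pos (pow_pos hα0 i) (by positivity))
      (by linarith [hroot])
      (fun n => ink n k * α ^ n)
      (by show ink 0 k * α ^ 0 = 1; rw [ink_zero]; simp)
      hrec
    refine ⟨c, hc, ?_⟩
    have heq : (fun n : ℕ => ink n k / (1 / α) ^ n) = fun n => ink n k * α ^ n := by
      funext n
      rw [div_eq_mul_inv, one_div, inv_pow, inv_inv]
    rw [heq]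
    exact htend
end

section
/- Let i_n = Σ ∏_{j=1}^{m} 1/(a_j!), the sum ranging over all compositions (a_1,…,a_m) of n. Then i_n equals the coefficient of x^n in the power series expansion of 1/(2 − e^x), and i_n ∼ (1/(2 log 2)) · (1/log 2)^n as n → ∞. -/
open Filter PowerSeries
open MeasureTheory Set


noncomputable def iN (n : ℕ) : ℝ :=
  ∑' l : {l : List ℕ // l.sum = n ∧ ∀ a ∈ l, 1 ≤ a},
    (l.1.map (fun a => (1 : ℝ) / a.factorial)).prod

abbrev CompS (n : ℕ) := {l : List ℕ // l.sum = n ∧ ∀ a ∈ l, 1 ≤ a}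

noncomputable def wt (l : List ℕ) : ℝ := (l.map (fun a => (1 : ℝ) / a.factorial)).prod

def compEquiv (n : ℕ) : Composition n ≃ CompS n where
  toFun c := ⟨c.blocks, c.blocks_sum, fun a ha => c.blocks_pos ha⟩
  invFun l := ⟨l.1, fun {i} hi => l.2.2 i hi, l.2.1⟩
  left_inv c := rfl
  right_inv l := rfl

instance (n : ℕ) : Fintype (CompS n) := Fintype.ofEquiv _ (compEquiv n)

lemma iN_eq_sum (n : ℕ) : iN n = ∑ l : CompS n, wt l.1 := by
  rw [iN, tsum_fintype]; rfl

lemma iN_zero : iN 0 = 1 := by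
  rw [iN_eq_sum]
  have : (Finset.univ : Finset (CompS 0)) = {⟨[], by simp, by simp⟩} := by
    ext ⟨l, hs, hp⟩
    simp only [Finset.mem_univ, Finset.mem_singleton, true_iff]
    have : l = [] := by
      cases l with
      | nil => rfl
      | cons a t =>
        exfalso
        have := hp a List.mem_cons_self
        simp [List.sum_cons] at hs
        omega
    subst this; rfl
  rw [this, Finset.sum_singleton, wt]; simp

def splitEquiv (n : ℕ) : CompS (n + 1) ≃ (Σ m : Fin (n + 1), CompS (n - m.1)) where
  toFun := fun ⟨l, hs, hp⟩ =>
    match l, hs, hp with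
    | [], hs, _ => absurd hs (by simp)
    | a :: t, hs, hp =>
      ⟨⟨a - 1, by
        have h1 : 1 ≤ a := hp a List.mem_cons_self
        have h2 : a + t.sum = n + 1 := by simpa [List.sum_cons] using hs
        omega⟩,
       ⟨t, by
          have h1 : 1 ≤ a := hp a List.mem_cons_self
          have h2 : a + t.sum = n + 1 := by simpa [List.sum_cons] using hs
          simp only
          omega,
        fun b hb => hp b (List.mem_cons_of_mem _ hb)⟩⟩
  invFun := fun ⟨m, l, hs, hp⟩ =>
    ⟨(m.1 + 1) :: l, by
      have hm : m.1 ≤ n := Nat.lt_succ_iff.mp m.2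
      simp [List.sum_cons, hs]
      omega,
     by
      intro b hb
      rcases List.mem_cons.mp hb with h | h
      · omega
      · exact hp b h⟩
  left_inv := fun ⟨l, hs, hp⟩ => by
    match l, hs, hp with
    | [], hs, _ => exact absurd hs (by simp)
    | a :: t, hs, hp =>
      have h1 : 1 ≤ a := hp a List.mem_cons_self
      simp only [Subtype.mk.injEq, List.cons.injEq]
      exact ⟨by omega, trivial⟩
  right_inv := fun ⟨m, l, hs, hp⟩ => rfl

lemma iN_succ (n : ℕ) :
    iN (n + 1) = ∑ m ∈ Finset.range (n + 1), iN (n - m) / (m + 1).factorial := by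
  rw [iN_eq_sum, ← Equiv.sum_comp (splitEquiv n).symm (fun l => wt l.1)]
  rw [← Finset.univ_sigma_univ, Finset.sum_sigma]
  rw [← Fin.sum_univ_eq_sum_range (fun m => iN (n - m) / (m + 1).factorial)]
  refine Finset.sum_congr rfl fun m _ => ?_
  rw [iN_eq_sum, Finset.sum_div]
  refine Finset.sum_congr rfl fun l _ => ?_
  obtain ⟨l, hs, hp⟩ := l
  show wt ((m.1 + 1) :: l) = wt l / (m.1 + 1).factorial
  simp only [wt, List.map_cons, List.prod_cons]
  field_simp

lemma summable_s (n : ℕ) : Summable (fun j : ℕ => (j : ℝ) ^ n * (1 / 2 : ℝ) ^ j) :=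
  summable_pow_mul_geometric_of_norm_lt_one n (by rw [Real.norm_eq_abs, abs_of_pos] <;> norm_num)

noncomputable def sN (n : ℕ) : ℝ := ∑' j : ℕ, (j : ℝ) ^ n * (1 / 2 : ℝ) ^ j

noncomputable def u (n : ℕ) : ℝ := sN n / (2 * n.factorial)

lemma u_zero : u 0 = 1 := by
  have h : sN 0 = 2 := by
    rw [sN]
    simpa using tsum_geometric_two
  rw [u, h]; norm_num

lemma shift_tsum (n : ℕ) (hn : 1 ≤ n) :
    ∑' j : ℕ, ((j : ℝ) + 1) ^ n * (1 / 2 : ℝ) ^ j = 2 * sN n := by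
  have hs := summable_s n
  have h0 : sN n = ((0:ℕ):ℝ)^n * (1/2:ℝ)^0 + ∑' j : ℕ, ((j+1 : ℕ) : ℝ) ^ n * (1/2:ℝ) ^ (j+1) := by
    rw [sN]
    exact Summable.tsum_eq_zero_add hs
  have hz : ((0:ℕ):ℝ)^n = 0 := by
    rw [Nat.cast_zero]; exact zero_pow (by omega)
  have h1 : ∀ j : ℕ, ((j+1 : ℕ) : ℝ) ^ n * (1/2:ℝ) ^ (j+1)
      = (1/2 : ℝ) * (((j:ℝ)+1)^n * (1/2:ℝ)^j) := by
    intro j; push_cast; ring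
  rw [hz, zero_mul, zero_add] at h0
  simp_rw [h1] at h0
  rw [tsum_mul_left] at h0
  rw [h0]; ring

lemma u_rec (n : ℕ) (hn : 1 ≤ n) :
    ∑ k ∈ Finset.range (n + 1), u (n - k) / k.factorial = 2 * u n := by
  have step1 : ∀ k, u (n - k) / k.factorial
      = ∑' j : ℕ, ((j : ℝ) ^ (n-k) * (1 / 2 : ℝ) ^ j) / (2 * (n-k).factorial * k.factorial) := by
    intro k
    rw [tsum_div_const, u, sN]
    ring
  simp_rw [step1]
  rw [← Summable.tsum_finsetSum (fun k _ => (summable_s (n-k)).div_const _)]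
  have step3 : ∀ j : ℕ, (∑ k ∈ Finset.range (n+1),
      ((j : ℝ) ^ (n-k) * (1 / 2 : ℝ) ^ j) / (2 * (n-k).factorial * k.factorial))
      = ((j:ℝ)+1)^n * (1/2:ℝ)^j / (2 * n.factorial) := by
    intro j
    rw [← Finset.sum_range_reflect]
    simp only [Nat.add_sub_cancel]
    have e1 : ∀ k ∈ Finset.range (n+1),
        ((j : ℝ) ^ (n-(n-k)) * (1 / 2 : ℝ) ^ j) / (2 * (n-(n-k)).factorial * (n-k).factorial)
        = (1/2:ℝ)^j / (2 * n.factorial) * ((j:ℝ)^k * 1^(n-k) * (n.choose k : ℝ)) := by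
      intro k hk
      have hk' : k ≤ n := Nat.lt_succ_iff.mp (Finset.mem_range.mp hk)
      have h2 : n - (n - k) = k := by omega
      rw [h2, Nat.cast_choose ℝ hk']
      have hkf : (k.factorial : ℝ) ≠ 0 := Nat.cast_ne_zero.mpr k.factorial_ne_zero
      field_simp
      ring
    rw [Finset.sum_congr rfl e1, ← Finset.mul_sum, ← add_pow]
    ring
  simp_rw [step3]
  rw [tsum_div_const, shift_tsum n hn, u]
  have hnf : (n.factorial : ℝ) ≠ 0 := Nat.cast_ne_zero.mpr n.factorial_ne_zero
  field_simp

lemma u_succ (n : ℕ) :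
    u (n + 1) = ∑ m ∈ Finset.range (n + 1), u (n - m) / (m + 1).factorial := by
  have h := u_rec (n + 1) (by omega)
  rw [Finset.sum_range_succ'] at h
  simp only [Nat.sub_zero, Nat.factorial_zero, Nat.cast_one, div_one] at h
  have he : ∀ k, n + 1 - (k + 1) = n - k := fun k => by omega
  simp_rw [he] at h
  linarith

lemma coeff_two (n : ℕ) : PowerSeries.coeff n (2 : ℝ⟦X⟧) = if n = 0 then 2 else 0 := by
  have : (2 : ℝ⟦X⟧) = PowerSeries.C 2 := by
    rw [map_ofNat]
  rw [this, PowerSeries.coeff_C]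

lemma iN_eq_u : ∀ n, iN n = u n := by
  intro n
  induction n using Nat.strong_induction_on with
  | _ n ih =>
    match n with
    | 0 => rw [iN_zero, u_zero]
    | Nat.succ m =>
      rw [iN_succ, u_succ]
      exact Finset.sum_congr rfl fun k _ => by rw [ih (m - k) (by omega)]

lemma iN_rec2 (n : ℕ) :
    ∑ k ∈ Finset.range (n + 2), iN k / (n + 1 - k).factorial = 2 * iN (n + 1) := by
  rw [Finset.sum_range_succ]
  simp only [Nat.sub_self, Nat.factorial_zero, Nat.cast_one, div_one]
  have h : ∑ k ∈ Finset.range (n + 1), iN k / ((n + 1 - k).factorial : ℝ)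
      = ∑ m ∈ Finset.range (n + 1), iN (n - m) / ((m + 1).factorial : ℝ) := by
    rw [← Finset.sum_range_reflect (fun k => iN k / ((n + 1 - k).factorial : ℝ)) (n + 1)]
    refine Finset.sum_congr rfl fun m hm => ?_
    have hm' : m ≤ n := Nat.lt_succ_iff.mp (Finset.mem_range.mp hm)
    have e1 : n + 1 - 1 - m = n - m := by omega
    have e2 : n + 1 - (n - m) = m + 1 := by omega
    rw [e1, e2]
  rw [h, ← iN_succ]; ring

lemma mk_iN_eq : PowerSeries.mk iN = (2 - PowerSeries.exp ℝ)⁻¹ := by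
  rw [PowerSeries.eq_inv_iff_mul_eq_one]
  · ext n
    rw [PowerSeries.coeff_mul, Finset.Nat.sum_antidiagonal_eq_sum_range_succ_mk]
    have hcoe : ∀ k : ℕ, PowerSeries.coeff k (2 - PowerSeries.exp ℝ)
        = (if k = 0 then (2:ℝ) else 0) - 1 / k.factorial := by
      intro k
      rw [map_sub, coeff_two, PowerSeries.coeff_exp]
      norm_num
    simp only [PowerSeries.coeff_mk, hcoe, mul_sub]
    rw [Finset.sum_sub_distrib]
    match n with
    | 0 => simp [iN_zero]; norm_num
    | Nat.succ m =>
      have hA : ∑ k ∈ Finset.range (m + 2), iN k * (if m + 1 - k = 0 then (2:ℝ) else 0)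
          = 2 * iN (m + 1) := by
        rw [Finset.sum_range_succ]
        rw [Finset.sum_eq_zero fun k hk => by
          have hk' := Finset.mem_range.mp hk
          rw [if_neg (by omega : ¬ (m + 1 - k = 0)), mul_zero]]
        simp [mul_comm]
      have hB : ∑ k ∈ Finset.range (m + 2), iN k * (1 / ((m + 1 - k).factorial : ℝ))
          = 2 * iN (m + 1) := by
        rw [← iN_rec2 m]
        exact Finset.sum_congr rfl fun k _ => by rw [mul_one_div]
      rw [hA, hB]
      simp [PowerSeries.coeff_one]
  · rw [map_sub, PowerSeries.constantCoeff_exp, map_ofNat]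
    norm_num

noncomputable def hfun (n : ℕ) (t : ℝ) : ℝ := t ^ n * Real.exp (-t)

lemma hfun_cont (n : ℕ) : Continuous (hfun n) :=
  (continuous_pow n).mul (Real.continuous_exp.comp continuous_neg)

lemma hfun_hasDeriv (n : ℕ) (t : ℝ) :
    HasDerivAt (hfun n) ((n * t ^ (n - 1)) * Real.exp (-t) - t ^ n * Real.exp (-t)) t := by
  have h1 : HasDerivAt (fun t : ℝ => Real.exp (-t)) (-Real.exp (-t)) t := by
    simpa using (hasDerivAt_neg t).exp
  have : HasDerivAt (hfun n)
      (↑n * t ^ (n - 1) * Real.exp (-t) + t ^ n * -Real.exp (-t)) t := (hasDerivAt_pow n t).mul h1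
  convert this using 1
  ring

lemma hfun_nonneg (n : ℕ) {t : ℝ} (ht : 0 ≤ t) : 0 ≤ hfun n t :=
  mul_nonneg (pow_nonneg ht n) (Real.exp_pos _).le

lemma hfun_mono (n : ℕ) (hn : 1 ≤ n) : MonotoneOn (hfun n) (Icc 0 (n : ℝ)) := by
  refine monotoneOn_of_deriv_nonneg (convex_Icc _ _) (hfun_cont n).continuousOn
    (fun t _ => ((hfun_hasDeriv n t).differentiableAt).differentiableWithinAt) ?_
  intro t ht
  rw [interior_Icc] at ht
  rw [(hfun_hasDeriv n t).deriv]
  have h1 : 0 ≤ t := ht.1.le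
  have h2 : t ≤ n := ht.2.le
  have : (n : ℝ) * t ^ (n - 1) * Real.exp (-t) - t ^ n * Real.exp (-t)
      = t ^ (n - 1) * Real.exp (-t) * ((n : ℝ) - t) := by
    have : t ^ n = t ^ (n - 1) * t := by
      conv_lhs => rw [show n = (n - 1) + 1 by omega]
      ring
    rw [this]; ring
  rw [this]
  have h3 : 0 ≤ (n:ℝ) - t := by linarith
  have h4 : 0 ≤ t ^ (n - 1) * Real.exp (-t) := by positivity
  exact mul_nonneg h4 h3

lemma hfun_anti (n : ℕ) (hn : 1 ≤ n) : AntitoneOn (hfun n) (Ici (n : ℝ)) := by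
  refine antitoneOn_of_deriv_nonpos (convex_Ici _) (hfun_cont n).continuousOn
    (fun t _ => ((hfun_hasDeriv n t).differentiableAt).differentiableWithinAt) ?_
  intro t ht
  rw [interior_Ici] at ht
  rw [(hfun_hasDeriv n t).deriv]
  have h1 : (0:ℝ) < t := lt_of_le_of_lt (by positivity) ht
  have h2 : (n : ℝ) ≤ t := ht.le
  have e : (n : ℝ) * t ^ (n - 1) * Real.exp (-t) - t ^ n * Real.exp (-t)
      = t ^ (n - 1) * Real.exp (-t) * ((n : ℝ) - t) := by
    have : t ^ n = t ^ (n - 1) * t := by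
      conv_lhs => rw [show n = (n - 1) + 1 by omega]
      ring
    rw [this]; ring
  rw [e]
  have : ((n:ℝ) - t) ≤ 0 := by linarith
  have hp : 0 ≤ t ^ (n - 1) * Real.exp (-t) := by positivity
  exact mul_nonpos_of_nonneg_of_nonpos hp this

lemma hfun_le_max (n : ℕ) (hn : 1 ≤ n) {t : ℝ} (ht : 0 ≤ t) : hfun n t ≤ hfun n n := by
  rcases le_total t n with h | h
  · exact hfun_mono n hn ⟨ht, h⟩ ⟨by positivity, le_refl _⟩ h
  · exact hfun_anti n hn (Set.mem_Ici.mpr (le_refl _)) h h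

lemma hfun_eqOn (n : ℕ) :
    EqOn (fun x : ℝ => Real.exp (-x) * x ^ ((n:ℝ) + 1 - 1)) (hfun n) (Ioi 0) := by
  intro x hx
  have : Real.exp (-x) * x ^ ((n:ℝ) + 1 - 1) = hfun n x := by
    rw [hfun, show ((n:ℝ) + 1 - 1) = ((n:ℕ):ℝ) by push_cast; ring, Real.rpow_natCast]
    ring
  exact this

lemma hfun_integrableOn (n : ℕ) : IntegrableOn (hfun n) (Ioi (0:ℝ)) := by
  have h := Real.GammaIntegral_convergent (s := (n:ℝ) + 1) (by positivity)
  exact h.congr_fun (hfun_eqOn n) measurableSet_Ioi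

lemma hfun_integral (n : ℕ) : ∫ t in Ioi (0:ℝ), hfun n t = n.factorial := by
  have h := Real.Gamma_eq_integral (s := (n:ℝ) + 1) (by positivity)
  rw [Real.Gamma_nat_eq_factorial] at h
  rw [← setIntegral_congr_fun measurableSet_Ioi (hfun_eqOn n), ← h]
set_option maxHeartbeats 1000000 in

lemma sandwich (n : ℕ) (hn : 1 ≤ n) :
    |(∑' j : ℕ, hfun n (Real.log 2 * j)) - (Real.log 2)⁻¹ * n.factorial| ≤ 2 * hfun n n := by
  set L : ℝ := Real.log 2 with hLdef
  have hL : 0 < L := Real.log_pos one_lt_two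
  set g : ℝ → ℝ := fun u => hfun n (L * u) with hgdef
  -- basic properties of g
  have gnonneg : ∀ u : ℝ, 0 ≤ u → 0 ≤ g u := fun u hu => hfun_nonneg n (mul_nonneg hL.le hu)
  have gmax : ∀ u : ℝ, 0 ≤ u → g u ≤ hfun n n := fun u hu => hfun_le_max n hn (mul_nonneg hL.le hu)
  have gmono : MonotoneOn g (Icc 0 ((n:ℝ)/L)) := by
    intro a ha b hb hab
    have h1 : a * L ≤ n := (le_div_iff₀ hL).mp ha.2
    have h2 : b * L ≤ n := (le_div_iff₀ hL).mp hb.2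
    exact hfun_mono n hn ⟨mul_nonneg hL.le ha.1, by linarith [mul_comm a L]⟩
      ⟨mul_nonneg hL.le hb.1, by linarith [mul_comm b L]⟩
      (mul_le_mul_of_nonneg_left hab hL.le)
  have ganti : AntitoneOn g (Ici ((n:ℝ)/L)) := by
    intro a ha b hb hab
    have h1 : (n:ℝ) ≤ a * L := (div_le_iff₀ hL).mp ha
    have h2 : (n:ℝ) ≤ b * L := (div_le_iff₀ hL).mp hb
    exact hfun_anti n hn (by rw [mem_Ici]; linarith [mul_comm a L])
      (by rw [mem_Ici]; linarith [mul_comm b L])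
      (mul_le_mul_of_nonneg_left hab hL.le)
  have gint : IntegrableOn g (Ioi (0:ℝ)) := by
    have := (integrableOn_Ioi_comp_mul_left_iff (hfun n) 0 hL).mpr
    rw [mul_zero] at this
    exact this (hfun_integrableOn n)
  have gval : ∫ u in Ioi (0:ℝ), g u = L⁻¹ * n.factorial := by
    have := integral_comp_mul_left_Ioi (hfun n) 0 hL
    rw [mul_zero, hfun_integral n, smul_eq_mul] at this
    exact this
  have hexp : Real.exp (-L) = 1/2 := by
    rw [Real.exp_neg, hLdef, Real.exp_log two_pos]; norm_num
  have g_eq : ∀ j : ℕ, g (j : ℝ) = L^n * ((j:ℝ)^n * (1/2:ℝ)^j) := by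
    intro j
    show hfun n (L * j) = _
    rw [hfun, mul_pow, show -(L * (j:ℝ)) = (j:ℕ) * (-L) by push_cast; ring,
      Real.exp_nat_mul, hexp]
    ring
  have gsum : Summable (fun j : ℕ => g (j : ℝ)) := by
    refine Summable.congr (((summable_s n).mul_left (L^n))) fun j => (g_eq j).symm
  set M := hfun n n with hM
  have hMnn : 0 ≤ M := hfun_nonneg n (by positivity)
  set K := ⌈(n:ℝ)/L⌉₊ with hKdef
  have hK1 : (n:ℝ)/L ≤ (K:ℝ) := Nat.le_ceil _
  have hKpos : 1 ≤ K := Nat.ceil_pos.mpr (by positivity)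
  have hK2 : (K:ℝ) - 1 ≤ (n:ℝ)/L := by
    have := Nat.ceil_lt_add_one (show 0 ≤ (n:ℝ)/L by positivity)
    linarith
  have hK0 : (0:ℝ) ≤ (K:ℝ) - 1 := by
    have : (1:ℝ) ≤ (K:ℝ) := by exact_mod_cast hKpos
    linarith
  have hcast : ((K-1:ℕ):ℝ) = (K:ℝ) - 1 := by
    rw [Nat.cast_sub hKpos]; norm_num
  have gintK : IntegrableOn g (Ioi ((K:ℝ))) := gint.mono_set (Ioi_subset_Ioi (by linarith))
  have Isplit : ∫ u in Ioi (0:ℝ), g u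
      = (∫ u in Ioc (0:ℝ) ((K:ℝ)-1), g u) + ((∫ u in Ioc ((K:ℝ)-1) (K:ℝ), g u)
        + ∫ u in Ioi ((K:ℝ)), g u) := by
    have h1 : Ioi (0:ℝ) = Ioc 0 ((K:ℝ)-1) ∪ Ioi ((K:ℝ)-1) := (Ioc_union_Ioi_eq_Ioi hK0).symm
    have h2 : Ioi ((K:ℝ)-1) = Ioc ((K:ℝ)-1) (K:ℝ) ∪ Ioi (K:ℝ) :=
      (Ioc_union_Ioi_eq_Ioi (by linarith)).symm
    rw [h1, setIntegral_union (Ioc_disjoint_Ioi le_rfl) measurableSet_Ioi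
      (gint.mono_set Ioc_subset_Ioi_self) (gint.mono_set (Ioi_subset_Ioi hK0)), h2,
      setIntegral_union (Ioc_disjoint_Ioi le_rfl) measurableSet_Ioi
      (gint.mono_set (Ioc_subset_Ioi_self.trans (Ioi_subset_Ioi hK0)))
      (gint.mono_set (Ioi_subset_Ioi (by linarith)))]
  have Imid_nonneg : 0 ≤ ∫ u in Ioc ((K:ℝ)-1) (K:ℝ), g u :=
    setIntegral_nonneg measurableSet_Ioc fun x hx => gnonneg x (le_of_lt (lt_of_le_of_lt hK0 hx.1))
  have Imid_le : ∫ u in Ioc ((K:ℝ)-1) (K:ℝ), g u ≤ M := by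
    have h1 : ∫ u in Ioc ((K:ℝ)-1) (K:ℝ), g u ≤ ∫ _ in Ioc ((K:ℝ)-1) (K:ℝ), M := by
      refine setIntegral_mono_on
        (gint.mono_set (Ioc_subset_Ioi_self.trans (Ioi_subset_Ioi hK0)))
        (integrableOn_const measure_Ioc_lt_top.ne) measurableSet_Ioc ?_
      intro x hx
      exact gmax x (le_of_lt (lt_of_le_of_lt hK0 hx.1))
    have h2 : ∫ _ in Ioc ((K:ℝ)-1) (K:ℝ), M = M := by
      rw [setIntegral_const, Real.volume_real_Ioc, smul_eq_mul,
        show (K:ℝ) - ((K:ℝ)-1) = 1 by ring]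
      simp
    linarith
  -- upper bound pieces
  have up1 : ∑ i ∈ Finset.range (K-1), g (i:ℝ) ≤ ∫ u in Ioc (0:ℝ) ((K:ℝ)-1), g u := by
    have hmono' : MonotoneOn g (Icc (0:ℝ) (0 + ((K-1:ℕ):ℝ))) := by
      refine gmono.mono (Icc_subset_Icc le_rfl ?_)
      rw [zero_add, hcast]; linarith
    have := hmono'.sum_le_integral
    simp only [zero_add] at this
    rw [intervalIntegral.integral_of_le (by rw [hcast]; linarith)] at this
    rw [← hcast]
    exact this
  have up2 : ∀ N : ℕ, ∑ i ∈ Finset.range N, g ((K:ℝ) + ((i+1:ℕ):ℝ)) ≤ ∫ u in Ioi ((K:ℝ)), g u := by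
    intro N
    have hanti' : AntitoneOn g (Icc ((K:ℝ)) ((K:ℝ) + (N:ℕ))) := by
      refine ganti.mono ?_
      intro x hx
      exact le_trans hK1 hx.1
    refine le_trans hanti'.sum_le_integral ?_
    rw [intervalIntegral.integral_of_le (le_add_of_nonneg_right (Nat.cast_nonneg N))]
    refine setIntegral_mono_set gintK ?_ (HasSubset.Subset.eventuallyLE Ioc_subset_Ioi_self)
    refine (ae_restrict_iff' measurableSet_Ioi).mpr (ae_of_all _ fun x hx => ?_)
    exact gnonneg x (le_of_lt (lt_of_le_of_lt (by linarith) hx))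
  have sum_shiftU : Summable (fun i : ℕ => g ((i + (K+1) : ℕ):ℝ)) :=
    (summable_nat_add_iff (K+1)).mpr gsum
  have tailU : ∑' i : ℕ, g ((i + (K+1) : ℕ):ℝ) ≤ ∫ u in Ioi ((K:ℝ)), g u := by
    refine Summable.tsum_le_of_sum_range_le sum_shiftU fun N => ?_
    refine le_trans (le_of_eq (Finset.sum_congr rfl fun i _ => ?_)) (up2 N)
    congr 1
    push_cast
    ring
  have splitU : ∑' j : ℕ, g (j:ℝ)
      = ∑ j ∈ Finset.range (K+1), g (j:ℝ) + ∑' i : ℕ, g ((i + (K+1) : ℕ):ℝ) :=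
    (Summable.sum_add_tsum_nat_add (K+1) gsum).symm
  have headU : ∑ j ∈ Finset.range (K+1), g (j:ℝ)
      = ∑ j ∈ Finset.range (K-1), g (j:ℝ) + g (((K-1:ℕ)):ℝ) + g ((K:ℕ):ℝ) := by
    have e : K + 1 = ((K-1) + 1) + 1 := by omega
    have e2 : (K - 1) + 1 = K := by omega
    rw [e, Finset.sum_range_succ, Finset.sum_range_succ, e2]
  have upper : ∑' j : ℕ, g (j:ℝ) ≤ (∫ u in Ioi (0:ℝ), g u) + 2 * M := by
    have h1 : g (((K-1:ℕ)):ℝ) ≤ M := gmax _ (by positivity)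
    have h2 : g ((K:ℕ):ℝ) ≤ M := gmax _ (by positivity)
    rw [splitU, headU, Isplit]
    have := tailU
    linarith [up1]
  -- lower bound pieces
  have low1 : ∫ u in Ioc (0:ℝ) ((K:ℝ)-1), g u ≤ ∑ i ∈ Finset.range (K-1), g ((i+1:ℕ):ℝ) := by
    have hmono' : MonotoneOn g (Icc (0:ℝ) (0 + ((K-1:ℕ):ℝ))) := by
      refine gmono.mono (Icc_subset_Icc le_rfl ?_)
      rw [zero_add, hcast]; linarith
    have := hmono'.integral_le_sum
    simp only [zero_add] at this
    rw [intervalIntegral.integral_of_le (by rw [hcast]; linarith)] at this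
    rw [← hcast]
    exact this
  have sum_shiftL : Summable (fun i : ℕ => g ((i + K : ℕ):ℝ)) :=
    (summable_nat_add_iff K).mpr gsum
  have low2 : ∫ u in Ioi ((K:ℝ)), g u ≤ ∑' i : ℕ, g ((i + K : ℕ):ℝ) := by
    have t1 : Tendsto (fun N : ℕ => ∫ x in (K:ℝ)..((K:ℝ)+N), g x) atTop
        (nhds (∫ u in Ioi ((K:ℝ)), g u)) :=
      intervalIntegral_tendsto_integral_Ioi _ gintK
        (tendsto_atTop_add_const_left _ _ tendsto_natCast_atTop_atTop)
    have t2 : Tendsto (fun N : ℕ => ∑ i ∈ Finset.range N, g ((i + K : ℕ):ℝ)) atTop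
        (nhds (∑' i : ℕ, g ((i + K : ℕ):ℝ))) := sum_shiftL.hasSum.tendsto_sum_nat
    refine le_of_tendsto_of_tendsto' t1 t2 fun N => ?_
    have hanti' : AntitoneOn g (Icc ((K:ℝ)) ((K:ℝ) + (N:ℕ))) := by
      refine ganti.mono ?_
      intro x hx
      exact le_trans hK1 hx.1
    refine le_trans hanti'.integral_le_sum (le_of_eq (Finset.sum_congr rfl fun i _ => ?_))
    congr 1
    push_cast
    ring
  have splitL : ∑' j : ℕ, g (j:ℝ)
      = ∑ j ∈ Finset.range K, g (j:ℝ) + ∑' i : ℕ, g ((i + K : ℕ):ℝ) :=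
    (Summable.sum_add_tsum_nat_add K gsum).symm
  have headL : ∑ j ∈ Finset.range K, g (j:ℝ)
      = ∑ i ∈ Finset.range (K-1), g ((i+1:ℕ):ℝ) + g ((0:ℕ):ℝ) := by
    have e : K = (K-1) + 1 := by omega
    rw [e, Finset.sum_range_succ']
    push_cast
    ring
  have lower : (∫ u in Ioi (0:ℝ), g u) - M ≤ ∑' j : ℕ, g (j:ℝ) := by
    have h0 : 0 ≤ g ((0:ℕ):ℝ) := gnonneg _ (by norm_num)
    rw [splitL, headL, Isplit]
    linarith [low1, low2]
  have habs : |(∑' j : ℕ, g (j:ℝ)) - (∫ u in Ioi (0:ℝ), g u)| ≤ 2 * M := by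
    rw [abs_le]
    constructor <;> linarith [upper, lower]
  rw [gval] at habs
  exact habs


lemma hfun_log_eq (n j : ℕ) :
    hfun n (Real.log 2 * j) = (Real.log 2)^n * ((j:ℝ)^n * (1/2:ℝ)^j) := by
  have hexp : Real.exp (-Real.log 2) = 1/2 := by
    rw [Real.exp_neg, Real.exp_log two_pos]; norm_num
  rw [hfun, mul_pow, show -(Real.log 2 * (j:ℝ)) = (j:ℕ) * (-Real.log 2) by push_cast; ring,
    Real.exp_nat_mul, hexp]
  ring

lemma stirling_piece :
    Tendsto (fun n : ℕ => hfun n n / n.factorial) atTop (nhds 0) := by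
  have h1 : Tendsto (fun n : ℕ => Real.sqrt (2*n) * Stirling.stirlingSeq n) atTop atTop := by
    refine Tendsto.atTop_mul_pos (Real.sqrt_pos.mpr Real.pi_pos)
      ?_ Stirling.tendsto_stirlingSeq_sqrt_pi
    have hsqrt : Tendsto Real.sqrt atTop atTop := by
      refine tendsto_atTop_atTop.mpr fun b => ⟨max 0 (b*b), fun a ha => ?_⟩
      calc b ≤ |b| := le_abs_self b
      _ = Real.sqrt (b*b) := (Real.sqrt_mul_self_eq_abs b).symm
      _ ≤ Real.sqrt a := Real.sqrt_le_sqrt (le_trans (le_max_right _ _) ha)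
    exact hsqrt.comp ((tendsto_natCast_atTop_atTop (R := ℝ)).const_mul_atTop two_pos)
  have h2 := h1.inv_tendsto_atTop
  refine h2.congr' ?_
  filter_upwards [eventually_ge_atTop 1] with n hn
  have hnpos : (0:ℝ) < n := by exact_mod_cast hn
  have hsq : (0:ℝ) < Real.sqrt (2*n) := Real.sqrt_pos.mpr (by positivity)
  have hfac : (0:ℝ) < n.factorial := by exact_mod_cast n.factorial_pos
  have hpow : (0:ℝ) < ((n:ℝ) / Real.exp 1) ^ n := by positivity
  have hs : Stirling.stirlingSeq n = n.factorial / (Real.sqrt (2*n) * ((n:ℝ)/Real.exp 1)^n) := rfl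
  have hh : hfun n n = ((n:ℝ)/Real.exp 1)^n := by
    rw [hfun, div_pow, Real.exp_one_pow, Real.exp_neg]
    ring
  rw [Pi.inv_apply, hs, hh]
  field_simp

/-- `iₙ` equals the coefficient of `xⁿ` in `1/(2 - eˣ)`, and
`iₙ ∼ (1/(2 log 2)) · (1/log 2)ⁿ` as `n → ∞`. -/
theorem iN_coeff_and_asymptotics :
    (∀ n : ℕ, iN n = PowerSeries.coeff n (2 - PowerSeries.exp ℝ)⁻¹) ∧
    Tendsto (fun n : ℕ => iN n / (1 / Real.log 2) ^ n) atTop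
      (nhds (1 / (2 * Real.log 2))) := by
  constructor
  · intro n
    rw [← mk_iN_eq, PowerSeries.coeff_mk]
  · set L := Real.log 2 with hLdef
    have hL : 0 < L := Real.log_pos one_lt_two
    have key : ∀ n : ℕ, 1 ≤ n →
        |iN n / (1/L)^n - 1/(2*L)| ≤ hfun n n / n.factorial := by
      intro n hn
      have hfac : (0:ℝ) < n.factorial := by exact_mod_cast n.factorial_pos
      have hsand := sandwich n hn
      have htsum : (∑' j : ℕ, hfun n (L * j)) = L^n * sN n := by
        rw [sN, ← tsum_mul_left]
        exact tsum_congr fun j => hfun_log_eq n j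
      rw [htsum] at hsand
      have hiN : iN n / (1/L)^n = (L^n * sN n) / (2 * n.factorial) := by
        rw [iN_eq_u n, u, one_div, inv_pow]
        field_simp
      rw [hiN]
      have heq : (L^n * sN n) / (2 * n.factorial) - 1/(2*L)
          = ((L^n * sN n) - L⁻¹ * n.factorial) / (2 * n.factorial) := by
        field_simp
      rw [heq, abs_div, abs_of_pos (by positivity : (0:ℝ) < 2 * n.factorial)]
      rw [div_le_div_iff₀ (by positivity) hfac]
      calc |L ^ n * sN n - L⁻¹ * ↑n.factorial| * ↑n.factorial
          ≤ (2 * hfun n n) * ↑n.factorial :=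
            mul_le_mul_of_nonneg_right hsand hfac.le
        _ = hfun n ↑n * (2 * ↑n.factorial) := by ring
    rw [tendsto_iff_dist_tendsto_zero]
    refine squeeze_zero' ?_ ?_ stirling_piece
    · filter_upwards with n using dist_nonneg
    · filter_upwards [eventually_ge_atTop 1] with n hn
      rw [Real.dist_eq]
      exact key n hn
end

section
/- Let s_n be the total number of surjections from {1,…,n} onto {1,…,m}, summed over all m ≥ 1 (the n-th ordered Bell / Fubini number). Then s_n ∼ (1/(2 log 2)) · (1/log 2)^n · n! as n → ∞. -/
open Filter Finset Function Real MeasureTheory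

noncomputable def Sj (n j : ℕ) : ℕ :=
  Nat.card {f : Fin n → Fin j // Function.Surjective f}

/-- `surj n` = `sₙ`: the number of pairs `(m, f)` with `m ≥ 1` and `f` a surjection
from `{1,…,n}` onto `{1,…,m}` (the `n`-th ordered Bell / Fubini number). -/
noncomputable def surj (n : ℕ) : ℕ :=
  Nat.card (Σ m : {m : ℕ // 1 ≤ m}, {f : Fin n → Fin (m : ℕ) // Function.Surjective f})

lemma Sj_eq_card (n j : ℕ) :
    Sj n j = Fintype.card {f : Fin n → Fin j // Function.Surjective f} :=
  Nat.card_eq_fintype_card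

lemma Sj_eq_zero {n j : ℕ} (h : n < j) : Sj n j = 0 := by
  rw [Sj_eq_card, Fintype.card_eq_zero_iff]
  constructor
  rintro ⟨f, hf⟩
  have := Fintype.card_le_of_surjective f hf
  simp only [Fintype.card_fin] at this
  omega

lemma surj_eq_sum {n : ℕ} (hn : 1 ≤ n) :
    surj n = ∑ j ∈ range (n + 1), Sj n j := by
  have hle : ∀ (x : Σ m : {m : ℕ // 1 ≤ m},
      {f : Fin n → Fin (m : ℕ) // Function.Surjective f}), (x.1 : ℕ) < n + 1 := by
    rintro ⟨⟨m, hm⟩, ⟨f, hf⟩⟩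
    have := Fintype.card_le_of_surjective f hf
    simp only [Fintype.card_fin] at this
    simpa [Nat.lt_succ_iff] using this
  have e : (Σ m : {m : ℕ // 1 ≤ m}, {f : Fin n → Fin (m : ℕ) // Function.Surjective f}) ≃
      (Σ i : Fin (n + 1), {f : Fin n → Fin (i : ℕ) // Function.Surjective f}) :=
    { toFun := fun x => ⟨⟨(x.1 : ℕ), hle x⟩, x.2⟩
      invFun := fun y => ⟨⟨(y.1 : ℕ), Nat.pos_of_ne_zero fun hi =>
        Fin.elim0 ((hi ▸ y.2.1) ⟨0, hn⟩)⟩, y.2⟩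
      left_inv := fun x => rfl
      right_inv := fun y => rfl }
  rw [surj, Nat.card_congr e, Nat.card_eq_fintype_card, Fintype.card_sigma,
    ← Fin.sum_univ_eq_sum_range (fun j => Sj n j) (n + 1)]
  exact Finset.sum_congr rfl fun i _ => (Sj_eq_card n i).symm

lemma card_fiber (n k : ℕ) (s : Finset (Fin k)) :
    Fintype.card {f : Fin n → Fin k // Finset.image f univ = s} = Sj n s.card := by
  have eA : {f : Fin n → Fin k // Finset.image f univ = s} ≃
      {g : Fin n → {x // x ∈ s} // Surjective g} :=
    { toFun := fun f => ⟨fun i => ⟨f.1 i, by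
        have := mem_image_of_mem f.1 (mem_univ i)
        rwa [f.2] at this⟩, by
        rintro ⟨y, hy⟩
        rw [← f.2, mem_image] at hy
        obtain ⟨i, _, hi⟩ := hy
        exact ⟨i, by simpa using hi⟩⟩
      invFun := fun g => ⟨fun i => (g.1 i : Fin k), by
        ext y
        simp only [mem_image, mem_univ, true_and]
        constructor
        · rintro ⟨i, rfl⟩; exact (g.1 i).2
        · intro hy
          obtain ⟨i, hi⟩ := g.2 ⟨y, hy⟩
          exact ⟨i, by rw [hi]⟩⟩
      left_inv := fun f => rfl
      right_inv := fun g => rfl }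
  have e : {x // x ∈ s} ≃ Fin s.card :=
    (Fintype.equivFin _).trans (finCongr (Fintype.card_coe s))
  have eB : {g : Fin n → {x // x ∈ s} // Surjective g} ≃
      {g : Fin n → Fin s.card // Surjective g} :=
    Equiv.subtypeEquiv (Equiv.arrowCongr (Equiv.refl _) e) (by
      intro g
      simp [Equiv.arrowCongr, Equiv.comp_surjective])
  rw [Fintype.card_congr (eA.trans eB), Sj_eq_card]

lemma pow_eq_sum (n k : ℕ) :
    k ^ n = ∑ j ∈ range (n + 1), k.choose j * Sj n j := by
  have h1 : k ^ n = ∑ s : Finset (Fin k), Sj n s.card := by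
    have := Fintype.card_congr (Equiv.sigmaFiberEquiv
      (fun f : Fin n → Fin k => Finset.image f univ)).symm
    rw [Fintype.card_fun, Fintype.card_fin, Fintype.card_fin] at this
    rw [this, Fintype.card_sigma]
    exact Finset.sum_congr rfl fun s _ => card_fiber n k s
  have h2 : (∑ s : Finset (Fin k), Sj n s.card) =
      ∑ j ∈ range (k + 1), k.choose j * Sj n j := by
    rw [← Finset.powerset_univ, Finset.sum_powerset]
    refine Finset.sum_congr (by simp) fun j hj => ?_
    rw [Finset.sum_congr rfl (fun t ht => by
      rw [(Finset.mem_powersetCard.1 ht).2]), Finset.sum_const,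
      Finset.card_powersetCard, card_univ, Fintype.card_fin, smul_eq_mul]
  rw [h1, h2]
  rcases le_total k n with hkn | hkn
  · apply Finset.sum_subset (by simp [Finset.range_subset]; omega)
    intro j _ hj
    simp only [mem_range, not_lt] at hj
    rw [Nat.choose_eq_zero_of_lt (by omega), zero_mul]
  · symm
    apply Finset.sum_subset (by simp [Finset.range_subset]; omega)
    intro j _ hj
    simp only [mem_range, not_lt] at hj
    rw [Sj_eq_zero (by omega), mul_zero]

lemma summable_choose (j : ℕ) : Summable (fun k : ℕ => (k.choose j : ℝ) * (1/2)^k) := by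
  rw [← summable_nat_add_iff j]
  have h : Summable (fun k : ℕ => ((k + j).choose j : ℝ) * (1/2)^k) :=
    summable_choose_mul_geometric_of_norm_lt_one j (by norm_num)
  apply (h.mul_left ((1/2 : ℝ)^j)).congr
  intro k
  ring

lemma tsum_choose (j : ℕ) : ∑' k : ℕ, (k.choose j : ℝ) * (1/2)^(k+1) = 1 := by
  have hs := summable_choose j
  have key : ∑' k : ℕ, (k.choose j : ℝ) * (1/2)^k = 2 := by
    rw [← Summable.sum_add_tsum_nat_add j hs]
    have h0 : ∑ i ∈ range j, (i.choose j : ℝ) * (1/2)^i = 0 := by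
      apply Finset.sum_eq_zero
      intro i hi
      rw [Nat.choose_eq_zero_of_lt (mem_range.1 hi)]
      simp
    have h1 : ∑' k : ℕ, ((k + j).choose j : ℝ) * (1/2)^(k+j) = 2 := by
      have : ∀ k : ℕ, ((k + j).choose j : ℝ) * (1/2)^(k+j)
          = (1/2)^j * (((k + j).choose j : ℝ) * (1/2)^k) := fun k => by ring
      rw [tsum_congr this, tsum_mul_left,
        tsum_choose_mul_geometric_of_norm_lt_one j (by norm_num : ‖(1/2 : ℝ)‖ < 1)]
      rw [show (1:ℝ) - 1/2 = 1/2 by norm_num, one_div ((1/2:ℝ)^(j+1)), ← inv_pow,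
        show ((1:ℝ)/2)⁻¹ = 2 by norm_num, pow_succ, ← mul_assoc, one_div, ← mul_pow]
      norm_num
    rw [h0, h1, zero_add]
  calc ∑' k : ℕ, (k.choose j : ℝ) * (1/2)^(k+1)
      = ∑' k : ℕ, (1/2) * ((k.choose j : ℝ) * (1/2)^k) := tsum_congr fun k => by ring
    _ = 1 := by rw [tsum_mul_left, key]; norm_num

lemma summable_pow_half (n : ℕ) : Summable (fun k : ℕ => (k:ℝ)^n * (1/2)^(k+1)) := by
  have h := summable_pow_mul_geometric_of_norm_lt_one (R := ℝ) n
    (r := 1/2) (by norm_num)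
  apply (h.mul_right (1/2)).congr
  intro k; ring

lemma surj_eq_tsum' (n : ℕ) :
    ∑' k : ℕ, (k:ℝ)^n * (1/2)^(k+1) = ∑ j ∈ range (n + 1), (Sj n j : ℝ) := by
  have step : ∀ k : ℕ, (k:ℝ)^n * (1/2)^(k+1)
      = ∑ j ∈ range (n + 1), (Sj n j : ℝ) * ((k.choose j : ℝ) * (1/2)^(k+1)) := by
    intro k
    have h := pow_eq_sum n k
    have h2 : ((k:ℝ))^n = ∑ j ∈ range (n + 1), (k.choose j : ℝ) * (Sj n j : ℝ) := by
      exact_mod_cast congrArg (Nat.cast : ℕ → ℝ) h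
    rw [h2, Finset.sum_mul]
    exact Finset.sum_congr rfl fun j _ => by ring
  rw [tsum_congr step, Summable.tsum_finsetSum (fun j _ =>
    (((summable_choose j).mul_right (1/2)).mul_left ((Sj n j : ℝ))).congr (fun k => by ring))]
  exact Finset.sum_congr rfl fun j _ => by
    rw [tsum_mul_left, tsum_choose j, mul_one]

noncomputable def gg (n : ℕ) (x : ℝ) : ℝ := x ^ n * Real.exp (-x) / n.factorial

lemma gg_nonneg {n : ℕ} {x : ℝ} (hx : 0 ≤ x) : 0 ≤ gg n x := by
  unfold gg; positivity

lemma gg_zero {n : ℕ} (hn : 1 ≤ n) : gg n 0 = 0 := by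
  unfold gg; rw [zero_pow (by omega)]; ring

lemma gg_exp {n : ℕ} {x : ℝ} (hx : 0 < x) :
    gg n x = Real.exp (n * Real.log x - x) / n.factorial := by
  unfold gg
  rw [Real.exp_sub, Real.exp_nat_mul, Real.exp_log hx, Real.exp_neg]
  ring

lemma gg_le_gg {n : ℕ} {x y : ℝ} (hx : 0 < x) (hy : 0 < y)
    (h : (n:ℝ) * Real.log x - x ≤ n * Real.log y - y) : gg n x ≤ gg n y := by
  rw [gg_exp hx, gg_exp hy]
  have hpos : (0:ℝ) < n.factorial := by positivity
  gcongr

lemma gg_le_peak {n : ℕ} (hn : 1 ≤ n) {x : ℝ} (hx : 0 ≤ x) : gg n x ≤ gg n n := by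
  have hnpos : (0:ℝ) < n := by exact_mod_cast hn
  rcases eq_or_lt_of_le hx with rfl | hx'
  · rw [gg_zero hn]; exact gg_nonneg hnpos.le
  · apply gg_le_gg hx' hnpos
    have key := Real.log_le_sub_one_of_pos (show (0:ℝ) < x / n by positivity)
    rw [Real.log_div (ne_of_gt hx') (ne_of_gt hnpos)] at key
    have h1 := mul_le_mul_of_nonneg_left key hnpos.le
    have e : (n:ℝ) * (x/n - 1) = x - n := by field_simp
    rw [e, mul_sub] at h1
    linarith

lemma gg_monoOn {n : ℕ} (hn : 1 ≤ n) : MonotoneOn (gg n) (Set.Icc 0 (n:ℝ)) := by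
  rintro x ⟨hx0, hxn⟩ y ⟨hy0, hyn⟩ hxy
  rcases eq_or_lt_of_le hx0 with rfl | hx'
  · rw [gg_zero hn]; exact gg_nonneg hy0
  · have hy' : 0 < y := lt_of_lt_of_le hx' hxy
    apply gg_le_gg hx' hy'
    have hlog : Real.log x ≤ Real.log y := Real.log_le_log hx' hxy
    have key := Real.log_le_sub_one_of_pos (show (0:ℝ) < x / y by positivity)
    rw [Real.log_div (ne_of_gt hx') (ne_of_gt hy')] at key
    have hL : 1 - x/y ≤ Real.log y - Real.log x := by linarith
    have e : y * (1 - x/y) = y - x := by field_simp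
    have c : y - x ≤ (n:ℝ) * (Real.log y - Real.log x) :=
      calc y - x = y * (1 - x/y) := e.symm
      _ ≤ y * (Real.log y - Real.log x) := mul_le_mul_of_nonneg_left hL hy'.le
      _ ≤ (n:ℝ) * (Real.log y - Real.log x) :=
          mul_le_mul_of_nonneg_right hyn (by linarith)
    rw [mul_sub] at c
    linarith

lemma gg_antiOn {n : ℕ} (hn : 1 ≤ n) : AntitoneOn (gg n) (Set.Ici (n:ℝ)) := by
  rintro x hx y hy hxy
  simp only [Set.mem_Ici] at hx hy
  have hnpos : (0:ℝ) < n := by exact_mod_cast hn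
  have hx' : 0 < x := lt_of_lt_of_le hnpos hx
  have hy' : 0 < y := lt_of_lt_of_le hnpos hy
  apply gg_le_gg hy' hx'
  have hlog : Real.log x ≤ Real.log y := Real.log_le_log hx' hxy
  have key := Real.log_le_sub_one_of_pos (show (0:ℝ) < y / x by positivity)
  rw [Real.log_div (ne_of_gt hy') (ne_of_gt hx')] at key
  have e : x * (y/x - 1) = y - x := by field_simp
  have c : (n:ℝ) * (Real.log y - Real.log x) ≤ y - x :=
    calc (n:ℝ) * (Real.log y - Real.log x) ≤ x * (Real.log y - Real.log x) :=
          mul_le_mul_of_nonneg_right hx (by linarith)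
    _ ≤ x * (y/x - 1) := mul_le_mul_of_nonneg_left key hx'.le
    _ = y - x := e
  rw [mul_sub] at c
  linarith

lemma gg_integrableOn (n : ℕ) : IntegrableOn (gg n) (Set.Ioi (0:ℝ)) := by
  have h := Real.GammaIntegral_convergent (s := (n + 1 : ℝ)) (by positivity)
  have h2 : IntegrableOn (fun x : ℝ => x ^ n * Real.exp (-x)) (Set.Ioi (0:ℝ)) := by
    apply h.congr_fun ?_ measurableSet_Ioi
    intro x hx
    simp only [show ((n:ℝ) + 1) - 1 = (n:ℝ) by ring, Real.rpow_natCast]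
    ring
  exact (h2.div_const _)

lemma gg_integral (n : ℕ) : ∫ x in Set.Ioi (0:ℝ), gg n x = 1 := by
  have h := Real.Gamma_eq_integral (s := (n + 1 : ℝ)) (by positivity)
  have h2 : Real.Gamma ((n:ℝ) + 1) = ∫ x in Set.Ioi (0:ℝ), x ^ n * Real.exp (-x) := by
    rw [h]
    apply setIntegral_congr_fun measurableSet_Ioi
    intro x hx
    simp only [show ((n:ℝ) + 1) - 1 = (n:ℝ) by ring, Real.rpow_natCast]
    ring
  have h3 : Real.Gamma ((n:ℝ) + 1) = n.factorial := by
    exact_mod_cast Real.Gamma_nat_eq_factorial n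
  unfold gg
  rw [integral_div, ← h2, h3, div_self (by positivity)]

lemma gg_peak_tendsto : Tendsto (fun n : ℕ => gg n n) atTop (nhds 0) := by
  have hsq : Tendsto (fun n : ℕ => Real.sqrt (2 * n)) atTop atTop := by
    rw [tendsto_atTop_atTop]
    intro b
    obtain ⟨N, hN⟩ := exists_nat_ge (b ^ 2 / 2)
    refine ⟨N, fun n hn => ?_⟩
    have h1 : (N:ℝ) ≤ n := by exact_mod_cast hn
    calc b ≤ |b| := le_abs_self b
    _ = Real.sqrt (b ^ 2) := (Real.sqrt_sq_eq_abs b).symm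
    _ ≤ Real.sqrt (2 * n) := Real.sqrt_le_sqrt (by nlinarith)
  have hst : Tendsto (fun n : ℕ => Stirling.stirlingSeq n * Real.sqrt (2 * n)) atTop atTop :=
    Filter.Tendsto.pos_mul_atTop ((Real.sqrt_pos.2 Real.pi_pos)) Stirling.tendsto_stirlingSeq_sqrt_pi hsq
  have hinv := hst.inv_tendsto_atTop
  apply hinv.congr'
  filter_upwards [eventually_ge_atTop 1] with n hn
  have hnpos : (0:ℝ) < n := by exact_mod_cast hn
  have hfac : (0:ℝ) < n.factorial := by positivity
  have hsqpos : (0:ℝ) < Real.sqrt (2 * n) := Real.sqrt_pos.2 (by positivity)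
  rw [Pi.inv_apply]
  unfold Stirling.stirlingSeq gg
  rw [Real.exp_neg, ← Real.exp_one_rpow (n:ℝ), Real.rpow_natCast]
  rw [div_pow]
  field_simp

noncomputable def al : ℝ := Real.log 2

lemma al_pos : 0 < al := Real.log_pos (by norm_num)

lemma al_lt_one : al < 1 :=
  show Real.log 2 < 1 from Real.log_two_lt_d9.trans_le (by norm_num)

noncomputable def hh (n : ℕ) (x : ℝ) : ℝ := al * gg n (al * x)

lemma hh_nonneg {n : ℕ} {x : ℝ} (hx : 0 ≤ x) : 0 ≤ hh n x :=
  mul_nonneg al_pos.le (gg_nonneg (mul_nonneg al_pos.le hx))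

lemma hh_le_peak {n : ℕ} (hn : 1 ≤ n) {x : ℝ} (hx : 0 ≤ x) : hh n x ≤ al * gg n n :=
  mul_le_mul_of_nonneg_left (gg_le_peak hn (mul_nonneg al_pos.le hx)) al_pos.le

lemma hh_monoOn {n : ℕ} (hn : 1 ≤ n) : MonotoneOn (hh n) (Set.Icc 0 ((n:ℝ)/al)) := by
  intro x hx y hy hxy
  apply mul_le_mul_of_nonneg_left _ al_pos.le
  apply gg_monoOn hn _ _ (mul_le_mul_of_nonneg_left hxy al_pos.le)
  · exact ⟨mul_nonneg al_pos.le hx.1, by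
      have := (le_div_iff₀ al_pos).1 hx.2; linarith⟩
  · exact ⟨mul_nonneg al_pos.le hy.1, by
      have := (le_div_iff₀ al_pos).1 hy.2; linarith⟩

lemma hh_antiOn {n : ℕ} (hn : 1 ≤ n) : AntitoneOn (hh n) (Set.Ici ((n:ℝ)/al)) := by
  intro x hx y hy hxy
  apply mul_le_mul_of_nonneg_left _ al_pos.le
  apply gg_antiOn hn _ _ (mul_le_mul_of_nonneg_left hxy al_pos.le)
  · simp only [Set.mem_Ici] at hx ⊢
    have := (div_le_iff₀ al_pos).1 hx; linarith
  · simp only [Set.mem_Ici] at hy ⊢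
    have := (div_le_iff₀ al_pos).1 hy; linarith

lemma hh_integrableOn (n : ℕ) : IntegrableOn (hh n) (Set.Ioi (0:ℝ)) := by
  have h := (integrableOn_Ioi_comp_mul_left_iff (gg n) 0 al_pos).2 (by
    rw [mul_zero]; exact gg_integrableOn n)
  exact h.const_mul al

lemma hh_integral (n : ℕ) : ∫ x in Set.Ioi (0:ℝ), hh n x = 1 := by
  unfold hh
  rw [MeasureTheory.integral_const_mul]
  rw [MeasureTheory.integral_comp_mul_left_Ioi (gg n) 0 al_pos, mul_zero, gg_integral n]
  rw [smul_eq_mul, mul_one, mul_inv_cancel₀ (ne_of_gt al_pos)]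

lemma hh_summable (n : ℕ) : Summable (fun k : ℕ => hh n (k : ℝ)) := by
  have hr : ‖Real.exp (-al)‖ < 1 := by
    rw [Real.norm_eq_abs, abs_of_pos (Real.exp_pos _)]
    rw [Real.exp_lt_one_iff]
    exact neg_neg_of_pos al_pos
  have h := (summable_pow_mul_geometric_of_norm_lt_one (R := ℝ) n hr).mul_left
    (al ^ (n+1) / n.factorial)
  apply h.congr
  intro k
  unfold hh gg
  rw [← Real.exp_nat_mul, show (k:ℝ) * -al = -(al * k) by ring]
  ring

section
variable {n : ℕ}

lemma hh_II (n : ℕ) {a b : ℝ} (ha : 0 ≤ a) (hab : a ≤ b) :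
    IntervalIntegrable (hh n) volume a b := by
  rw [intervalIntegrable_iff_integrableOn_Ioc_of_le hab]
  exact (hh_integrableOn n).mono_set (fun x hx => lt_of_le_of_lt ha hx.1)

lemma hh_eps_nonneg (n : ℕ) : 0 ≤ al * gg n n :=
  mul_nonneg al_pos.le (gg_nonneg (Nat.cast_nonneg n))

-- B bound : ∫ over Ioc M (M+1) of hh ≤ ε
lemma hh_B_le (hn : 1 ≤ n) (M : ℕ) :
    ∫ x in Set.Ioc (M:ℝ) ((M:ℝ)+1), hh n x ≤ al * gg n n := by
  have h1 : ∫ x in Set.Ioc (M:ℝ) ((M:ℝ)+1), hh n x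
      = ∫ x in (M:ℝ)..((M:ℝ)+1), hh n x := by
    rw [intervalIntegral.integral_of_le (by linarith)]
  rw [h1]
  have h2 := intervalIntegral.integral_mono_on (a := (M:ℝ)) (b := (M:ℝ)+1)
    (by linarith) (hh_II n (Nat.cast_nonneg M) (by linarith))
    (intervalIntegrable_const (c := al * gg n n))
    (fun x hx => hh_le_peak hn (le_trans (Nat.cast_nonneg M) hx.1))
  simpa using h2

lemma hh_split (M : ℕ) :
    (∫ x in Set.Ioc (0:ℝ) (M:ℝ), hh n x) + (∫ x in Set.Ioc (M:ℝ) ((M:ℝ)+1), hh n x)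
      + (∫ x in Set.Ioi ((M:ℝ)+1), hh n x) = 1 := by
  have i1 : IntegrableOn (hh n) (Set.Ioc (0:ℝ) (M:ℝ)) :=
    (hh_integrableOn n).mono_set (fun x hx => hx.1)
  have i2 : IntegrableOn (hh n) (Set.Ioc (M:ℝ) ((M:ℝ)+1)) :=
    (hh_integrableOn n).mono_set
      (fun x hx => lt_of_le_of_lt (Nat.cast_nonneg M) hx.1)
  have i3 : IntegrableOn (hh n) (Set.Ioi ((M:ℝ)+1)) :=
    (hh_integrableOn n).mono_set
      (fun x hx => lt_trans (by positivity : (0:ℝ) < (M:ℝ)+1) hx)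
  have u1 : Set.Ioc (0:ℝ) (M:ℝ) ∪ Set.Ioc (M:ℝ) ((M:ℝ)+1) = Set.Ioc (0:ℝ) ((M:ℝ)+1) :=
    Set.Ioc_union_Ioc_eq_Ioc (Nat.cast_nonneg M) (by linarith)
  have u2 : Set.Ioc (0:ℝ) ((M:ℝ)+1) ∪ Set.Ioi ((M:ℝ)+1) = Set.Ioi (0:ℝ) :=
    Set.Ioc_union_Ioi_eq_Ioi (by positivity)
  have d1 : Disjoint (Set.Ioc (0:ℝ) (M:ℝ)) (Set.Ioc (M:ℝ) ((M:ℝ)+1)) := by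
    apply Set.disjoint_left.2
    rintro x ⟨_, hx2⟩ ⟨hx3, _⟩
    exact absurd hx3 (not_lt.2 hx2)
  have d2 : Disjoint (Set.Ioc (0:ℝ) ((M:ℝ)+1)) (Set.Ioi ((M:ℝ)+1)) := by
    apply Set.disjoint_left.2
    rintro x ⟨_, hx2⟩ hx3
    exact absurd hx3 (not_lt.2 hx2)
  have i12 : IntegrableOn (hh n) (Set.Ioc (0:ℝ) ((M:ℝ)+1)) :=
    (hh_integrableOn n).mono_set (fun x hx => hx.1)
  have E2 : (∫ x in Set.Ioi (0:ℝ), hh n x)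
      = (∫ x in Set.Ioc (0:ℝ) ((M:ℝ)+1), hh n x) + (∫ x in Set.Ioi ((M:ℝ)+1), hh n x) := by
    rw [← setIntegral_union d2 measurableSet_Ioi i12 i3, u2]
  have E1 : (∫ x in Set.Ioc (0:ℝ) ((M:ℝ)+1), hh n x)
      = (∫ x in Set.Ioc (0:ℝ) (M:ℝ), hh n x) + (∫ x in Set.Ioc (M:ℝ) ((M:ℝ)+1), hh n x) := by
    rw [← setIntegral_union d1 measurableSet_Ioc i1 i2, u1]
  have := hh_integral n
  linarith

lemma hh_tsum_le (hn : 1 ≤ n) :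
    ∑' k : ℕ, hh n (k:ℝ) ≤ 1 + 2 * (al * gg n n) := by
  set p : ℝ := (n:ℝ) / al with hp_def
  have hp : 0 < p := div_pos (by exact_mod_cast hn) al_pos
  set M : ℕ := ⌊p⌋₊ with hM_def
  have hMle : (M:ℝ) ≤ p := Nat.floor_le hp.le
  have hpM : p < (M:ℝ) + 1 := Nat.lt_floor_add_one p
  rw [← Summable.sum_add_tsum_nat_add (M+2) (hh_summable n)]
  have s1 : ∑ k ∈ range M, hh n (k:ℝ) ≤ ∫ x in Set.Ioc (0:ℝ) (M:ℝ), hh n x := by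
    have mono := (hh_monoOn hn).mono
      (Set.Icc_subset_Icc le_rfl (by rw [zero_add]; exact hMle) :
        Set.Icc (0:ℝ) (0 + (M:ℕ)) ⊆ Set.Icc 0 p)
    have := mono.sum_le_integral
    rw [intervalIntegral.integral_of_le (by simp)] at this
    simpa using this
  have s2 : hh n ((M:ℝ)) ≤ al * gg n n := hh_le_peak hn (Nat.cast_nonneg M)
  have s3 : hh n (((M:ℕ):ℝ)+1) ≤ al * gg n n :=
    hh_le_peak hn (by positivity)
  have s4 : ∑' i : ℕ, hh n ((i + (M+2) : ℕ) : ℝ)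
      ≤ ∫ x in Set.Ioi ((M:ℝ)+1), hh n x := by
    apply Real.tsum_le_of_sum_range_le (fun i => hh_nonneg (Nat.cast_nonneg _))
    intro a
    have anti := (hh_antiOn hn).mono
      (Set.Icc_subset_Ici_self.trans (Set.Ici_subset_Ici.2 (le_of_lt hpM)) :
        Set.Icc ((M:ℝ)+1) (((M:ℝ)+1) + (a:ℕ)) ⊆ Set.Ici p)
    have h5 := anti.sum_le_integral
    have h6 : ∫ x in ((M:ℝ)+1)..(((M:ℝ)+1) + (a:ℕ)), hh n x
        ≤ ∫ x in Set.Ioi ((M:ℝ)+1), hh n x := by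
      rw [intervalIntegral.integral_of_le (by simp)]
      apply setIntegral_mono_set
      · exact (hh_integrableOn n).mono_set
          (fun x hx => lt_trans (by positivity : (0:ℝ) < (M:ℝ)+1) hx)
      · exact (ae_restrict_iff' measurableSet_Ioi).2 (ae_of_all _
          (fun x hx => hh_nonneg (le_trans (by positivity : (0:ℝ) ≤ (M:ℝ)+1) (le_of_lt hx))))
      · exact HasSubset.Subset.eventuallyLE (fun x hx => hx.1)
    calc ∑ i ∈ range a, hh n ((i + (M+2) : ℕ) : ℝ)
        = ∑ i ∈ range a, hh n (((M:ℝ)+1) + ((i+1 : ℕ):ℝ)) := by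
          apply Finset.sum_congr rfl
          intro i _
          congr 1
          push_cast
          ring
      _ ≤ ∫ x in ((M:ℝ)+1)..(((M:ℝ)+1) + (a:ℕ)), hh n x := h5
      _ ≤ _ := h6
  have split := hh_split (n := n) M
  have Bnn : 0 ≤ ∫ x in Set.Ioc (M:ℝ) ((M:ℝ)+1), hh n x :=
    setIntegral_nonneg measurableSet_Ioc
      (fun x hx => hh_nonneg (le_trans (Nat.cast_nonneg M) hx.1.le))
  have sum_split : ∑ k ∈ range (M+2), hh n (k:ℝ)
      = (∑ k ∈ range M, hh n (k:ℝ)) + hh n ((M:ℕ):ℝ) + hh n (((M+1:ℕ)):ℝ) := by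
    rw [Finset.sum_range_succ, Finset.sum_range_succ]
  rw [sum_split]
  push_cast
  push_cast at s4
  linarith

set_option maxHeartbeats 1000000 in
lemma hh_le_tsum (hn : 1 ≤ n) :
    1 - 2 * (al * gg n n) ≤ ∑' k : ℕ, hh n (k:ℝ) := by
  set p : ℝ := (n:ℝ) / al with hp_def
  have hp : 0 < p := div_pos (by exact_mod_cast hn) al_pos
  set M : ℕ := ⌊p⌋₊ with hM_def
  have hMle : (M:ℝ) ≤ p := Nat.floor_le hp.le
  have hpM : p < (M:ℝ) + 1 := Nat.lt_floor_add_one p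
  have heps := hh_eps_nonneg n
  set tail : ℝ := ∑' i : ℕ, hh n ((i + (M+2) : ℕ) : ℝ) with htail_def
  have tail_summable : Summable (fun i : ℕ => hh n ((i + (M+2) : ℕ) : ℝ)) :=
    (summable_nat_add_iff (M+2)).2 (hh_summable n)
  -- (i) A ≤ sum over shifted range
  have s1 : (∫ x in Set.Ioc (0:ℝ) (M:ℝ), hh n x)
      ≤ ∑ i ∈ range M, hh n (((i+1 : ℕ)):ℝ) := by
    have mono := (hh_monoOn hn).mono
      (Set.Icc_subset_Icc le_rfl (by rw [zero_add]; exact hMle) :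
        Set.Icc (0:ℝ) (0 + (M:ℕ)) ⊆ Set.Icc 0 p)
    have := mono.integral_le_sum
    rw [intervalIntegral.integral_of_le (by simp)] at this
    simpa using this
  -- (ii) B ≤ eps : hh_B_le
  -- (iii) C ≤ tail + eps
  have s3 : (∫ x in Set.Ioi ((M:ℝ)+1), hh n x) ≤ tail + al * gg n n := by
    have hU : (⋃ a : ℕ, Set.Ioc ((M:ℝ)+1) (((M:ℝ)+1) + a)) = Set.Ioi ((M:ℝ)+1) := by
      ext x
      simp only [Set.mem_iUnion, Set.mem_Ioc, Set.mem_Ioi]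
      constructor
      · rintro ⟨a, h1, _⟩; exact h1
      · intro hx
        obtain ⟨a, ha⟩ := exists_nat_ge (x - ((M:ℝ)+1))
        exact ⟨a, hx, by linarith⟩
    have hmono : Monotone (fun a : ℕ => Set.Ioc ((M:ℝ)+1) (((M:ℝ)+1) + a)) := by
      intro a b hab
      apply Set.Ioc_subset_Ioc le_rfl
      have : (a:ℝ) ≤ b := by exact_mod_cast hab
      linarith
    have hint : IntegrableOn (hh n) (⋃ a : ℕ, Set.Ioc ((M:ℝ)+1) (((M:ℝ)+1) + a)) := by
      rw [hU]
      exact (hh_integrableOn n).mono_set (fun x hx => lt_trans (by positivity : (0:ℝ) < (M:ℝ)+1) hx)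
    have htend := tendsto_setIntegral_of_monotone
      (fun a => measurableSet_Ioc) hmono hint
    rw [hU] at htend
    apply le_of_tendsto htend
    apply Eventually.of_forall
    intro a
    show (∫ x in Set.Ioc ((M:ℝ)+1) (((M:ℝ)+1) + a), hh n x) ≤ tail + al * gg n n
    have tail_nonneg : 0 ≤ tail :=
      tsum_nonneg (fun i => hh_nonneg (Nat.cast_nonneg _))
    rcases Nat.eq_zero_or_pos a with rfl | hapos
    · simp only [Nat.cast_zero, add_zero, Set.Ioc_self, setIntegral_empty]
      linarith
    obtain ⟨b, rfl⟩ := Nat.exists_eq_succ_of_ne_zero (Nat.pos_iff_ne_zero.1 hapos)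
    have anti := (hh_antiOn hn).mono
      (Set.Icc_subset_Ici_self.trans (Set.Ici_subset_Ici.2 (le_of_lt hpM)) :
        Set.Icc ((M:ℝ)+1) (((M:ℝ)+1) + ((b+1 : ℕ):ℝ)) ⊆ Set.Ici p)
    have h5 := anti.integral_le_sum
    rw [intervalIntegral.integral_of_le
      (le_add_of_nonneg_right (by positivity : (0:ℝ) ≤ ((b+1:ℕ):ℝ)))] at h5
    refine le_trans h5 ?_
    rw [Finset.sum_range_succ']
    have t1 : ∑ i ∈ range b, hh n (((M:ℝ)+1) + ((i+1 : ℕ):ℝ)) ≤ tail := by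
      have e : ∀ i : ℕ, hh n (((M:ℝ)+1) + ((i+1 : ℕ):ℝ)) = hh n ((i + (M+2) : ℕ) : ℝ) := by
        intro i; congr 1; push_cast; ring
      rw [Finset.sum_congr rfl (fun i _ => e i)]
      exact Summable.sum_le_tsum (range b) (fun i _ => hh_nonneg (Nat.cast_nonneg _)) tail_summable
    have t2 : hh n (((M:ℝ)+1) + ((0:ℕ):ℝ)) ≤ al * gg n n := by
      apply hh_le_peak hn (by positivity)
    linarith
  -- combine
  have split := hh_split (n := n) M
  have hB := hh_B_le hn M
  rw [← Summable.sum_add_tsum_nat_add (M+2) (hh_summable n)]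
  have sum_ineq : ∑ i ∈ range M, hh n (((i+1 : ℕ)):ℝ) ≤ ∑ k ∈ range (M+2), hh n (k:ℝ) := by
    have e1 := Finset.sum_range_succ' (fun k => hh n (k:ℝ)) M
    have e2 := Finset.sum_range_succ (fun k => hh n (k:ℝ)) (M+1)
    have h0 : 0 ≤ hh n ((0:ℕ):ℝ) := hh_nonneg (by norm_num)
    have hM1 : 0 ≤ hh n (((M+1:ℕ)):ℝ) := hh_nonneg (Nat.cast_nonneg _)
    simp only [show M + 1 + 1 = M + 2 from rfl] at e2
    push_cast at e1 e2 hM1 h0 ⊢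
    linarith
  rw [← htail_def]
  push_cast at sum_ineq s1 ⊢
  linarith
end


lemma eps_tendsto : Tendsto (fun n : ℕ => al * gg n n) atTop (nhds 0) := by
  have := gg_peak_tendsto.const_mul al
  simpa using this

lemma S_tendsto : Tendsto (fun n : ℕ => ∑' k : ℕ, hh n (k:ℝ)) atTop (nhds 1) := by
  have h1 : Tendsto (fun n : ℕ => 1 - 2 * (al * gg n n)) atTop (nhds 1) := by
    have := (eps_tendsto.const_mul 2).const_sub 1
    simpa using this
  have h2 : Tendsto (fun n : ℕ => 1 + 2 * (al * gg n n)) atTop (nhds 1) := by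
    have := (eps_tendsto.const_mul 2).const_add 1
    simpa using this
  apply tendsto_of_tendsto_of_tendsto_of_le_of_le' h1 h2
  · filter_upwards [eventually_ge_atTop 1] with n hn
    exact hh_le_tsum hn
  · filter_upwards [eventually_ge_atTop 1] with n hn
    exact hh_tsum_le hn

lemma exp_neg_al : Real.exp (-al) = 1/2 := by
  rw [Real.exp_neg, show al = Real.log 2 from rfl, Real.exp_log (by norm_num)]
  norm_num

lemma surj_eq_tsum {n : ℕ} (hn : 1 ≤ n) :
    (surj n : ℝ) = ∑' k : ℕ, (k:ℝ)^n * (1/2)^(k+1) := by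
  rw [surj_eq_tsum' n, surj_eq_sum hn]
  push_cast
  rfl

lemma key_eq {n : ℕ} (hn : 1 ≤ n) :
    (surj n : ℝ) / ((1 / Real.log 2) ^ n * (Nat.factorial n : ℝ))
      = (1/(2*al)) * ∑' k : ℕ, hh n (k:ℝ) := by
  rw [surj_eq_tsum hn, show Real.log 2 = al from rfl]
  rw [← tsum_mul_left, ← tsum_div_const]
  apply tsum_congr
  intro k
  have hfac : (0:ℝ) < (Nat.factorial n : ℝ) := by positivity
  unfold hh gg
  rw [show -(al * (k:ℝ)) = (k:ℝ) * (-al) by ring, Real.exp_nat_mul, exp_neg_al]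
  have hal := al_pos
  field_simp
  ring
  rw [mul_assoc (↑k ^ n : ℝ), ← mul_pow, mul_inv_cancel₀ hal.ne', one_pow, mul_one]

/-- `sₙ ∼ (1/(2 log 2)) · (1/log 2)ⁿ · n!` as `n → ∞`. -/
theorem surj_asymptotics :
    Tendsto (fun n : ℕ =>
        (surj n : ℝ) / ((1 / Real.log 2) ^ n * (Nat.factorial n : ℝ)))
      atTop (nhds (1 / (2 * Real.log 2))) := by
  have h := S_tendsto.const_mul (1/(2*al))
  rw [mul_one] at h
  apply h.congr'
  filter_upwards [eventually_ge_atTop 1] with n hn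
  exact (key_eq hn).symm
end

section
/- For every n ∈ ℕ, b_n ≤ h_n' ≤ h_n'' ≤ 2^{n−1}·b_n. -/
-- ### auxiliary lemmas


lemma mem_msup {H : Multiset (Finset ℕ)} {x : ℕ} : x ∈ H.sup ↔ ∃ E ∈ H, x ∈ E := by
  induction H using Multiset.induction with
  | empty => simp [Multiset.sup_zero]
  | cons a s ih => simp [Multiset.sup_cons, Finset.mem_union, ih]

lemma card_sup_le (H : Multiset (Finset ℕ)) : H.sup.card ≤ (H.map Finset.card).sum := by
  induction H using Multiset.induction with
  | empty => simp
  | cons a s ih =>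
    simp only [Multiset.sup_cons, Multiset.map_cons, Multiset.sum_cons]
    calc (a ⊔ s.sup).card ≤ a.card + s.sup.card := Finset.card_union_le _ _
    _ ≤ a.card + (s.map Finset.card).sum := by omega

lemma card_le_weight (H : Multiset (Finset ℕ)) (h : ∀ E ∈ H, E.Nonempty) :
    Multiset.card H ≤ sysWeight H := by
  induction H using Multiset.induction with
  | empty => simp [sysWeight]
  | cons a s ih =>
    have ha : 1 ≤ a.card := Finset.card_pos.2 (h a (Multiset.mem_cons_self a s))
    have := ih (fun E hE => h E (Multiset.mem_cons_of_mem hE))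
    simp only [sysWeight, Multiset.map_cons, Multiset.sum_cons, Multiset.card_cons] at *
    omega

lemma finite_norm (n : ℕ) :
    {H : Multiset (Finset ℕ) | IsNormalized H ∧ sysWeight H = n}.Finite := by
  classical
  apply Set.Finite.subset ((n • (Finset.Icc 1 n).powerset.val).powerset.toFinset.finite_toSet)
  rintro H ⟨⟨hne, m, hm⟩, hw⟩
  simp only [Finset.coe_sort_coe, Multiset.mem_toFinset, Multiset.mem_powerset, Finset.mem_coe]
  -- H ≤ n • powerset
  have hmn : m ≤ n := by
    have h1 := card_sup_le H
    rw [hm] at h1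
    have : (Finset.Icc 1 m).card = m := by rw [Nat.card_Icc]; omega
    rw [this] at h1
    exact le_trans h1 (le_of_eq hw)
  refine Multiset.le_iff_count.2 (fun E => ?_)
  by_cases hE : E ∈ H
  · have h1 : Multiset.count E H ≤ n := le_trans (Multiset.count_le_card E H)
      (le_trans (card_le_weight H hne) (le_of_eq hw))
    have h2 : E ⊆ Finset.Icc 1 n := by
      intro x hx
      have : x ∈ H.sup := mem_msup.2 ⟨E, hE, hx⟩
      rw [hm, Finset.mem_Icc] at this
      rw [Finset.mem_Icc]
      omega
    rw [Multiset.count_nsmul]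
    have : Multiset.count E (Finset.Icc 1 n).powerset.val = 1 :=
      Multiset.count_eq_one_of_mem (Finset.Icc 1 n).powerset.nodup (Finset.mem_powerset.2 h2)
    rw [this]
    omega
  · simp [Multiset.count_eq_zero.2 hE]

lemma finite_hpp (n : ℕ) : Finite {H : Multiset (Finset ℕ) // IsNormalized H ∧ sysWeight H = n} :=
  (finite_norm n).to_subtype

lemma finite_hp (n : ℕ) :
    Finite {H : Multiset (Finset ℕ) // IsNormalized H ∧ sysWeight H = n ∧ H.Nodup} := by
  have := finite_hpp n
  exact Finite.of_injective
    (fun X => (⟨X.1, X.2.1, X.2.2.1⟩ : {H : Multiset (Finset ℕ) // IsNormalized H ∧ sysWeight H = n}))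
    (fun a b h => Subtype.ext (Subtype.mk_eq_mk.mp h))

instance finite_setoid (n : ℕ) : Finite (Setoid (Fin n)) :=
  Finite.of_injective (fun s => (s : Fin n → Fin n → Prop))
    (fun a b h => Setoid.ext (fun x y => by rw [show (a : Fin n → Fin n → Prop) = b from h]))

-- classes of a setoid on Fin n, as finsets in {1,...,n}
noncomputable def cls {n : ℕ} (s : Setoid (Fin n)) (i : Fin n) : Finset ℕ :=
  (@Finset.filter _ (fun j => s j i) (Classical.decPred _) Finset.univ).image
    (fun j : Fin n => (j : ℕ) + 1)

noncomputable def sysOf {n : ℕ} (s : Setoid (Fin n)) : Finset (Finset ℕ) :=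
  Finset.univ.image (cls s)

lemma mem_cls {n : ℕ} (s : Setoid (Fin n)) (i : Fin n) (x : ℕ) :
    x ∈ cls s i ↔ ∃ j : Fin n, s j i ∧ (j : ℕ) + 1 = x := by
  simp only [cls, Finset.mem_image, Finset.mem_filter, Finset.mem_univ, true_and]

lemma cls_eq_of_rel {n : ℕ} (s : Setoid (Fin n)) {i i' : Fin n} (h : s i i') :
    cls s i = cls s i' := by
  ext x
  rw [mem_cls, mem_cls]
  constructor
  · rintro ⟨j, hj, rfl⟩; exact ⟨j, s.trans hj h, rfl⟩
  · rintro ⟨j, hj, rfl⟩; exact ⟨j, s.trans hj (s.symm h), rfl⟩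

lemma self_mem_cls {n : ℕ} (s : Setoid (Fin n)) (i : Fin n) : (i : ℕ) + 1 ∈ cls s i :=
  (mem_cls s i _).2 ⟨i, s.refl i, rfl⟩

lemma cls_disj {n : ℕ} (s : Setoid (Fin n)) {i i' : Fin n} (h : ¬ s i i') :
    Disjoint (cls s i) (cls s i') := by
  rw [Finset.disjoint_left]
  intro x hx hx'
  obtain ⟨j, hj, rfl⟩ := (mem_cls s i x).1 hx
  obtain ⟨j', hj', hh⟩ := (mem_cls s i' _).1 hx'
  have : j' = j := by omega
  subst this
  exact h (s.trans (s.symm hj) hj')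

lemma sysOf_normalized {n : ℕ} (s : Setoid (Fin n)) :
    IsNormalized (sysOf s).val ∧ sysWeight (sysOf s).val = n ∧ (sysOf s).val.Nodup := by
  classical
  have hsup : ((sysOf s).val).sup = Finset.Icc 1 n := by
    ext x
    rw [mem_msup, Finset.mem_Icc]
    constructor
    · rintro ⟨E, hE, hx⟩
      rw [Finset.mem_val, sysOf, Finset.mem_image] at hE
      obtain ⟨i, _, rfl⟩ := hE
      obtain ⟨j, _, rfl⟩ := (mem_cls s i x).1 hx
      omega
    · rintro ⟨hx1, hxn⟩
      have hlt : x - 1 < n := by omega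
      refine ⟨cls s ⟨x - 1, hlt⟩, ?_, ?_⟩
      · rw [Finset.mem_val, sysOf, Finset.mem_image]
        exact ⟨⟨x - 1, hlt⟩, Finset.mem_univ _, rfl⟩
      · have := self_mem_cls s ⟨x - 1, hlt⟩
        simpa [Nat.sub_add_cancel hx1] using this
  refine ⟨⟨?_, n, hsup⟩, ?_, (sysOf s).nodup⟩
  · intro E hE
    rw [Finset.mem_val, sysOf, Finset.mem_image] at hE
    obtain ⟨i, _, rfl⟩ := hE
    exact ⟨(i : ℕ) + 1, self_mem_cls s i⟩
  · -- weight
    have hdisj : ∀ E ∈ sysOf s, ∀ F ∈ sysOf s, E ≠ F → Disjoint (id E) (id F) := by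
      intro E hE F hF hne
      rw [sysOf, Finset.mem_image] at hE hF
      obtain ⟨i, _, rfl⟩ := hE
      obtain ⟨i', _, rfl⟩ := hF
      by_cases h : s i i'
      · exact absurd (cls_eq_of_rel s h) hne
      · exact cls_disj s h
    have hw : sysWeight (sysOf s).val = ∑ E ∈ sysOf s, E.card := rfl
    have hcb := Finset.card_biUnion hdisj
    simp only [id_eq] at hcb
    rw [hw, ← hcb]
    have : (sysOf s).biUnion id = Finset.Icc 1 n := by
      ext x
      rw [Finset.mem_biUnion]
      rw [← hsup, mem_msup]
      simp only [Finset.mem_val, id]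
    rw [this, Nat.card_Icc]
    omega

lemma sysOf_injective {n : ℕ} : Function.Injective (fun s : Setoid (Fin n) => sysOf s) := by
  intro s t h
  apply Setoid.ext
  intro a b
  simp only at h
  constructor
  · intro hab
    have h1 : cls s b ∈ sysOf t := by rw [← h, sysOf, Finset.mem_image]; exact ⟨b, Finset.mem_univ _, rfl⟩
    rw [sysOf, Finset.mem_image] at h1
    obtain ⟨i, _, hi⟩ := h1
    have ha : (a : ℕ) + 1 ∈ cls t i := by rw [hi]; exact (mem_cls s b _).2 ⟨a, hab, rfl⟩
    have hb : (b : ℕ) + 1 ∈ cls t i := by rw [hi]; exact self_mem_cls s b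
    obtain ⟨j, hj, hje⟩ := (mem_cls t i _).1 ha
    obtain ⟨j', hj', hje'⟩ := (mem_cls t i _).1 hb
    have : j = a := by omega
    subst this
    have : j' = b := by omega
    subst this
    exact t.trans hj (t.symm hj')
  · intro hab
    have h1 : cls t b ∈ sysOf s := by rw [h, sysOf, Finset.mem_image]; exact ⟨b, Finset.mem_univ _, rfl⟩
    rw [sysOf, Finset.mem_image] at h1
    obtain ⟨i, _, hi⟩ := h1
    have ha : (a : ℕ) + 1 ∈ cls s i := by rw [hi]; exact (mem_cls t b _).2 ⟨a, hab, rfl⟩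
    have hb : (b : ℕ) + 1 ∈ cls s i := by rw [hi]; exact self_mem_cls t b
    obtain ⟨j, hj, hje⟩ := (mem_cls s i _).1 ha
    obtain ⟨j', hj', hje'⟩ := (mem_cls s i _).1 hb
    have : j = a := by omega
    subst this
    have : j' = b := by omega
    subst this
    exact s.trans hj (s.symm hj')

lemma bell_le_hp (n : ℕ) : bell n ≤ hp n := by
  have := finite_hp n
  exact Nat.card_le_card_of_injective
    (fun s => (⟨(sysOf s).val, (sysOf_normalized s).1, (sysOf_normalized s).2⟩ :
      {H : Multiset (Finset ℕ) // IsNormalized H ∧ sysWeight H = n ∧ H.Nodup}))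
    (by
      intro a b h
      have hv : (sysOf a).val = (sysOf b).val := Subtype.mk_eq_mk.mp h
      exact sysOf_injective (Finset.val_injective hv))

lemma hp_le_hpp (n : ℕ) : hp n ≤ hpp n := by
  have := finite_hpp n
  exact Nat.card_le_card_of_injective
    (fun X => (⟨X.1, X.2.1, X.2.2.1⟩ : {H : Multiset (Finset ℕ) // IsNormalized H ∧ sysWeight H = n}))
    (fun a b h => Subtype.ext (Subtype.mk_eq_mk.mp h))

-- ### encoding of a weight-n normalized system

noncomputable def incFinset (H : Multiset (Finset ℕ)) : Finset (ℕ ×ₗ ℕ) :=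
  (Finset.range H.toList.length).biUnion
    (fun k => (H.toList.getD k ∅).image (fun v => toLex (v, k)))

noncomputable def incList (H : Multiset (Finset ℕ)) : List (ℕ ×ₗ ℕ) :=
  (incFinset H).sort (· ≤ ·)

noncomputable def vq (H : Multiset (Finset ℕ)) (q : ℕ) : ℕ :=
  (ofLex ((incList H).getD q (toLex (0, 0)))).1

noncomputable def kq (H : Multiset (Finset ℕ)) (q : ℕ) : ℕ :=
  (ofLex ((incList H).getD q (toLex (0, 0)))).2

noncomputable def bnd (n : ℕ) (H : Multiset (Finset ℕ)) : Finset ℕ :=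
  (Finset.range (n - 1)).filter (fun q => vq H q ≠ vq H (q + 1))

noncomputable def ptn (n : ℕ) (H : Multiset (Finset ℕ)) : Setoid (Fin n) :=
  ⟨fun a b => kq H a = kq H b, ⟨fun _ => rfl, Eq.symm, Eq.trans⟩⟩

noncomputable def rho (n : ℕ) (SP : Finset ℕ × Setoid (Fin n)) : Multiset (Finset ℕ) :=
  ((Finset.univ.image (fun i : Fin n =>
      @Finset.filter _ (fun j => SP.2 j i) (Classical.decPred _) Finset.univ)).val).map
    (fun c => c.image (fun j : Fin n => 1 + ((SP.1.filter (· < (j : ℕ))).card)))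

lemma mem_incFinset (H : Multiset (Finset ℕ)) (v k : ℕ) :
    toLex (v, k) ∈ incFinset H ↔ k < H.toList.length ∧ v ∈ H.toList.getD k ∅ := by
  simp only [incFinset, Finset.mem_biUnion, Finset.mem_range, Finset.mem_image]
  constructor
  · rintro ⟨k', hk', v', hv', he⟩
    have : (v', k') = (v, k) := toLex.injective he
    rw [Prod.mk.injEq] at this
    obtain ⟨rfl, rfl⟩ := this
    exact ⟨hk', hv'⟩
  · rintro ⟨hk, hv⟩
    exact ⟨k, hk, v, hv, rfl⟩

lemma sum_getD_card (L : List (Finset ℕ)) :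
    ∑ k ∈ Finset.range L.length, (L.getD k ∅).card = (L.map Finset.card).sum := by
  induction L with
  | nil => simp
  | cons a t ih =>
    simp only [List.length_cons, List.map_cons, List.sum_cons]
    rw [Finset.sum_range_succ']
    simp only [List.getD_cons_succ, List.getD_cons_zero]
    rw [ih]
    omega

lemma card_incFinset (H : Multiset (Finset ℕ)) : (incFinset H).card = sysWeight H := by
  rw [incFinset, Finset.card_biUnion]
  · have h1 : ∀ k, ((H.toList.getD k ∅).image (fun v => toLex (v, k))).card
        = (H.toList.getD k ∅).card := fun k =>
      Finset.card_image_of_injective _ (fun a b h => by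
        have := toLex.injective h; exact (Prod.mk.injEq .. ▸ this).1)
    simp only [h1]
    rw [sum_getD_card]
    conv_rhs => rw [show H = ↑H.toList from (Multiset.coe_toList H).symm]
    rfl
  · intro x _ y _ hxy
    rw [Function.onFun, Finset.disjoint_left]
    rintro p hp hp'
    simp only [Finset.mem_image] at hp hp'
    obtain ⟨v, _, rfl⟩ := hp
    obtain ⟨v', _, he⟩ := hp'
    have := toLex.injective he
    exact hxy ((Prod.mk.injEq .. ▸ this).2.symm ▸ rfl)

lemma reconstruct {n : ℕ} (hn : 1 ≤ n) {H : Multiset (Finset ℕ)}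
    (hnorm : IsNormalized H) (hw : sysWeight H = n) :
    rho n (bnd n H, ptn n H) = H := by
  classical
  obtain ⟨hne, m, hm⟩ := hnorm
  have hcoeL : (↑H.toList : Multiset (Finset ℕ)) = H := Multiset.coe_toList H
  set L := H.toList with hLdef
  set len := L.length with hlenL
  have hlen : (incList H).length = n := by
    rw [incList, Finset.length_sort, card_incFinset, hw]
  have hmemq : ∀ q, q < n → (incList H).getD q (toLex (0,0)) ∈ incFinset H := by
    intro q hq
    have hql : q < (incList H).length := by omega
    rw [List.getD_eq_getElem _ _ hql]
    have h2 := List.getElem_mem hql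
    exact (Finset.mem_sort (α := ℕ ×ₗ ℕ) (· ≤ ·)).1 h2
  have hvk : ∀ q, q < n → kq H q < len ∧ vq H q ∈ L.getD (kq H q) ∅ := by
    intro q hq
    have h1 := hmemq q hq
    rw [show (incList H).getD q (toLex (0,0)) = toLex (vq H q, kq H q) from rfl] at h1
    rw [mem_incFinset] at h1
    exact h1
  have hedge : ∀ k, k < len → L.getD k ∅ ∈ H := by
    intro k hk
    rw [List.getD_eq_getElem _ _ hk, ← hcoeL]
    exact List.getElem_mem hk
  have hsub : ∀ k, k < len → L.getD k ∅ ⊆ Finset.Icc 1 m := by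
    intro k hk
    rw [← hm]
    exact Finset.le_iff_subset.1 (Multiset.le_sup (hedge k hk))
  have hrange : ∀ q, q < n → 1 ≤ vq H q ∧ vq H q ≤ m := by
    intro q hq
    have h1 := hvk q hq
    have := hsub _ h1.1 h1.2
    rwa [Finset.mem_Icc] at this
  have hmono : ∀ q q', q ≤ q' → q' < n → vq H q ≤ vq H q' := by
    intro q q' hqq' hq'
    have hq'l : q' < (incList H).length := by omega
    have hql : q < (incList H).length := by omega
    have hs := Finset.pairwise_sort (α := ℕ ×ₗ ℕ) (incFinset H) (· ≤ ·)
    have hrel := hs.rel_get_of_le (a := ⟨q, hql⟩) (b := ⟨q', hq'l⟩) hqq'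
    have hle : (incList H).getD q (toLex (0,0)) ≤ (incList H).getD q' (toLex (0,0)) := by
      rw [List.getD_eq_getElem _ _ hql, List.getD_eq_getElem _ _ hq'l]
      exact hrel
    have h2 : toLex (ofLex ((incList H).getD q (toLex (0,0))))
        ≤ toLex (ofLex ((incList H).getD q' (toLex (0,0)))) := hle
    rcases Prod.Lex.le_iff.1 h2 with h | h
    · exact le_of_lt h
    · exact le_of_eq h.1
  have hvsurj : ∀ v, 1 ≤ v → v ≤ m → ∃ q, q < n ∧ vq H q = v := by
    intro v h1 h2
    have hv : v ∈ H.sup := by rw [hm, Finset.mem_Icc]; exact ⟨h1, h2⟩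
    obtain ⟨E, hE, hvE⟩ := mem_msup.1 hv
    rw [← hcoeL, Multiset.mem_coe] at hE
    obtain ⟨k, hk, hkE⟩ := List.mem_iff_getElem.1 hE
    have hT : toLex (v, k) ∈ incFinset H := by
      rw [mem_incFinset]
      exact ⟨hk, by rw [List.getD_eq_getElem _ _ hk, hkE]; exact hvE⟩
    rw [← Finset.mem_sort (α := ℕ ×ₗ ℕ) (· ≤ ·)] at hT
    have hT2 : toLex (v, k) ∈ incList H := hT
    obtain ⟨q, hq, hqe⟩ := List.mem_iff_getElem.1 hT2
    refine ⟨q, by omega, ?_⟩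
    rw [vq, List.getD_eq_getElem _ _ hq, hqe]
    rfl
  have hksurj : ∀ k, k < len → ∃ q, q < n ∧ kq H q = k := by
    intro k hk
    obtain ⟨v, hv⟩ := hne _ (hedge k hk)
    have hT : toLex (v, k) ∈ incFinset H := by
      rw [mem_incFinset]; exact ⟨hk, hv⟩
    rw [← Finset.mem_sort (α := ℕ ×ₗ ℕ) (· ≤ ·)] at hT
    have hT2 : toLex (v, k) ∈ incList H := hT
    obtain ⟨q, hq, hqe⟩ := List.mem_iff_getElem.1 hT2
    refine ⟨q, by omega, ?_⟩
    rw [kq, List.getD_eq_getElem _ _ hq, hqe]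
    rfl
  have hv0 : vq H 0 = 1 := by
    have hm1 : 1 ≤ m := le_trans (hrange 0 hn).1 (hrange 0 hn).2
    obtain ⟨q, hq, hvq⟩ := hvsurj 1 le_rfl hm1
    exact le_antisymm (hvq ▸ hmono 0 q (Nat.zero_le q) hq) (hrange 0 hn).1
  have hgap : ∀ q, q + 1 < n → vq H (q + 1) ≤ vq H q + 1 := by
    intro q hq1
    by_contra hc
    push_neg at hc
    have hv1 : 1 ≤ vq H q + 1 := by omega
    have hv2 : vq H q + 1 ≤ m := by
      have := (hrange (q+1) hq1).2
      omega
    obtain ⟨q', hq', hvq'⟩ := hvsurj (vq H q + 1) hv1 hv2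
    rcases le_or_gt q' q with h | h
    · have := hmono q' q h (by omega)
      omega
    · have := hmono (q+1) q' h (by omega)
      omega
  have hformula : ∀ q, q < n → vq H q = 1 + ((bnd n H).filter (· < q)).card := by
    intro q
    induction q with
    | zero =>
      intro _
      rw [Finset.filter_false_of_mem (fun x _ => by omega)]
      simpa using hv0
    | succ q ih =>
      intro hq1
      have hq : q < n := by omega
      have hqn1 : q < n - 1 := by omega
      have hmem : q ∈ bnd n H ↔ vq H q ≠ vq H (q + 1) := by
        simp [bnd, Finset.mem_filter, Finset.mem_range, hqn1]
      have hsplit : ((bnd n H).filter (· < q + 1)).card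
          = ((bnd n H).filter (· < q)).card + (if q ∈ bnd n H then 1 else 0) := by
        have h1 : (bnd n H).filter (· < q + 1)
            = (bnd n H).filter (· < q) ∪ (bnd n H).filter (· = q) := by
          rw [← Finset.filter_or]
          apply Finset.filter_congr
          intro x _
          constructor
          · intro h; omega
          · intro h; omega
        have h2 : Disjoint ((bnd n H).filter (· < q)) ((bnd n H).filter (· = q)) := by
          rw [Finset.disjoint_left]
          intro a ha ha'
          simp only [Finset.mem_filter] at ha ha'
          omega
        rw [h1, Finset.card_union_of_disjoint h2, Finset.filter_eq']
        congr 1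
        split <;> simp
      by_cases hb : vq H q = vq H (q + 1)
      · have : q ∉ bnd n H := by rw [hmem]; simpa using hb
        rw [hsplit, if_neg this, ← hb, ih hq]
        omega
      · have hqb : q ∈ bnd n H := hmem.2 hb
        have : vq H (q + 1) = vq H q + 1 := by
          have h1 := hgap q hq1
          have h2 := hmono q (q + 1) (by omega) hq1
          omega
        rw [hsplit, if_pos hqb, this, ih hq]
        omega
  have hfiber : ∀ k, k < len →
      (Finset.univ.filter (fun j : Fin n => kq H ↑j = k)).image (fun j : Fin n => vq H ↑j)
        = L.getD k ∅ := by
    intro k hk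
    ext v
    simp only [Finset.mem_image, Finset.mem_filter, Finset.mem_univ, true_and]
    constructor
    · rintro ⟨j, hj, rfl⟩
      have := (hvk j j.isLt).2
      rwa [hj] at this
    · intro hv
      have hT : toLex (v, k) ∈ incFinset H := by rw [mem_incFinset]; exact ⟨hk, hv⟩
      rw [← Finset.mem_sort (α := ℕ ×ₗ ℕ) (· ≤ ·)] at hT
      have hT2 : toLex (v, k) ∈ incList H := hT
      obtain ⟨q, hq, hqe⟩ := List.mem_iff_getElem.1 hT2
      have hqn : q < n := by omega
      refine ⟨⟨q, hqn⟩, ?_, ?_⟩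
      · show kq H q = k
        rw [kq, List.getD_eq_getElem _ _ hq, hqe]
        rfl
      · show vq H q = v
        rw [vq, List.getD_eq_getElem _ _ hq, hqe]
        rfl
  -- now compute rho
  simp only [rho]
  have hinst : (fun i : Fin n =>
      @Finset.filter _ (fun j => ((bnd n H, ptn n H).2) j i) (Classical.decPred _) Finset.univ)
      = fun i : Fin n => Finset.univ.filter (fun j : Fin n => kq H ↑j = kq H ↑i) := by
    funext i
    exact Finset.filter_congr (fun x _ => Iff.rfl)
  rw [hinst]
  have himage : Finset.univ.image
        (fun i : Fin n => Finset.univ.filter (fun j : Fin n => kq H ↑j = kq H ↑i))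
      = (Finset.range len).image (fun k => Finset.univ.filter (fun j : Fin n => kq H ↑j = k)) := by
    rw [show (fun i : Fin n => Finset.univ.filter (fun j : Fin n => kq H ↑j = kq H ↑i))
        = (fun k => Finset.univ.filter (fun j : Fin n => kq H ↑j = k))
          ∘ (fun i : Fin n => kq H ↑i) from rfl,
      ← Finset.image_image]
    congr 1
    ext k
    simp only [Finset.mem_image, Finset.mem_range, Finset.mem_univ, true_and]
    constructor
    · rintro ⟨i, rfl⟩; exact (hvk ↑i i.isLt).1
    · intro hk
      obtain ⟨q, hq, hkq⟩ := hksurj k hk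
      exact ⟨⟨q, hq⟩, hkq⟩
  rw [himage]
  have hfibinj : ∀ x ∈ (Finset.range len).val, ∀ y ∈ (Finset.range len).val,
      (fun k => Finset.univ.filter (fun j : Fin n => kq H ↑j = k)) x
        = (fun k => Finset.univ.filter (fun j : Fin n => kq H ↑j = k)) y → x = y := by
    intro x hx y hy hxy
    simp only at hxy
    rw [Finset.mem_val, Finset.mem_range] at hx hy
    obtain ⟨q, hq, hkq⟩ := hksurj x hx
    have h1 : (⟨q, hq⟩ : Fin n) ∈ Finset.univ.filter (fun j : Fin n => kq H ↑j = x) := by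
      simp [hkq]
    rw [hxy] at h1
    simp only [Finset.mem_filter] at h1
    rw [← hkq, h1.2]
  have hval : ((Finset.range len).image
        (fun k => Finset.univ.filter (fun j : Fin n => kq H ↑j = k))).val
      = (Finset.range len).val.map (fun k => Finset.univ.filter (fun j : Fin n => kq H ↑j = k)) := by
    rw [Finset.image_val, Multiset.dedup_eq_self.2]
    exact Multiset.Nodup.map_on hfibinj (Finset.range len).nodup
  rw [hval, Multiset.map_map]
  have hfinal : ∀ k ∈ (Finset.range len).val,
      ((fun c : Finset (Fin n) => c.image
          (fun j : Fin n => 1 + (((bnd n H, ptn n H).1.filter (· < (j : ℕ))).card)))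
        ∘ (fun k => Finset.univ.filter (fun j : Fin n => kq H ↑j = k))) k
      = L.getD k ∅ := by
    intro k hk
    rw [Finset.mem_val, Finset.mem_range] at hk
    show (Finset.univ.filter (fun j : Fin n => kq H ↑j = k)).image
        (fun j : Fin n => 1 + (((bnd n H).filter (· < (j : ℕ))).card)) = L.getD k ∅
    rw [← hfiber k hk]
    apply Finset.image_congr
    intro j _
    exact (hformula ↑j j.isLt).symm
  rw [Multiset.map_congr rfl hfinal]
  rw [Finset.range_val]
  have : Multiset.map (fun k => L.getD k ∅) (Multiset.range len) = ↑(List.map (fun k => L.getD k ∅) (List.range len)) := rfl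
  rw [this]
  rw [show List.map (fun k => L.getD k ∅) (List.range len) = L from ?_]
  · exact hcoeL
  · apply List.ext_getElem
    · simp [hlenL]
    · intro i h1 h2
      simp only [List.getElem_map, List.getElem_range]
      rw [List.getD_eq_getElem _ _ h2]

lemma hpp_le (n : ℕ) (hn : 1 ≤ n) : hpp n ≤ 2 ^ (n - 1) * bell n := by
  classical
  have key : hpp n ≤
      Nat.card ({S : Finset ℕ // S ∈ (Finset.range (n - 1)).powerset} × Setoid (Fin n)) := by
    apply Nat.card_le_card_of_injective
      (fun X : {H : Multiset (Finset ℕ) // IsNormalized H ∧ sysWeight H = n} =>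
        ((⟨bnd n X.1, Finset.mem_powerset.2 (Finset.filter_subset _ _)⟩ :
          {S : Finset ℕ // S ∈ (Finset.range (n - 1)).powerset}), ptn n X.1))
    intro a b h
    rw [Prod.mk.injEq, Subtype.mk_eq_mk] at h
    apply Subtype.ext
    have ha := reconstruct hn a.2.1 a.2.2
    have hb := reconstruct hn b.2.1 b.2.2
    rw [← ha, ← hb, h.1, h.2]
  refine le_trans key ?_
  rw [Nat.card_prod, bell]
  apply Nat.mul_le_mul_right
  rw [Nat.card_eq_fintype_card, Fintype.card_coe, Finset.card_powerset, Finset.card_range]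


/-- For every `n ∈ ℕ = {1,2,…}`, `bₙ ≤ hₙ' ≤ hₙ'' ≤ 2^{n-1}·bₙ`. -/
theorem bell_le_hp_le_hpp_le (n : ℕ) (hn : 1 ≤ n) :
    bell n ≤ hp n ∧ hp n ≤ hpp n ∧ hpp n ≤ 2 ^ (n - 1) * bell n := by
  exact ⟨bell_le_hp n, hp_le_hpp n, hpp_le n hn⟩
end
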